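/- arXiv:2602.11867 — 5 statements merged into one kernel-verified Lean document; each statement's English description precedes it below -/
import Mathlib

section
/- Let n, a, b, p, q be positive integers with n = p·a = q·b, and suppose n − (p+q) is odd (so that the genus (n−(p+q)+1)/2 of the passport [a^p, b^q, n] is an integer). Then the following are equivalent: (1) Nat.gcd p q = 1; (2) there exist permutations x, y of Fin n such that every orbit of x has size a, every orbit of y has size b, x*y is an n-cycle, and the subgroup of Equiv.Perm (Fin n) generated by x and y has cardinality n. In other words, the tree passport [a^p, b^q, n] admits a regular dessin if and only if gcd(p, q) = 1. -/
/-- The orbit of `e` under the permutation `σ`: `{σ^k e : k ∈ ℤ}`. -/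
def permOrbit {E : Type*} (σ : Equiv.Perm E) (e : E) : Set E :=
  {f | ∃ k : ℤ, (σ ^ k) e = f}

/-- Every orbit of `σ` has exactly `a` elements. -/
def allOrbitsSize {E : Type*} (σ : Equiv.Perm E) (a : ℕ) : Prop :=
  ∀ e : E, (permOrbit σ e).ncard = a

namespace TreeAux


variable {α β : Type*}

/-- `Equiv.permCongr` as a `MulEquiv`. -/
def pch (φ : α ≃ β) : Equiv.Perm α ≃* Equiv.Perm β where
  toEquiv := φ.permCongr
  map_mul' σ τ := by
    ext x
    simp [Equiv.permCongr_apply, Equiv.Perm.mul_apply]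

lemma pch_apply (φ : α ≃ β) (σ : Equiv.Perm α) (x : α) : pch φ σ (φ x) = φ (σ x) := by
  simp [pch, Equiv.permCongr_apply]

lemma pch_zpow (φ : α ≃ β) (σ : Equiv.Perm α) (k : ℤ) :
    (pch φ σ) ^ k = pch φ (σ ^ k) := (map_zpow (pch φ) σ k).symm

lemma pch_pow (φ : α ≃ β) (σ : Equiv.Perm α) (k : ℕ) :
    (pch φ σ) ^ k = pch φ (σ ^ k) := (map_pow (pch φ) σ k).symm

lemma permOrbit_pch (φ : α ≃ β) (σ : Equiv.Perm α) (e : α) :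
    permOrbit (pch φ σ) (φ e) = φ '' permOrbit σ e := by
  ext f
  simp only [permOrbit, Set.mem_setOf_eq, Set.mem_image]
  constructor
  · rintro ⟨k, hk⟩
    refine ⟨(σ ^ k) e, ⟨k, rfl⟩, ?_⟩
    rw [pch_zpow, pch_apply] at hk
    exact hk
  · rintro ⟨g, ⟨k, hk⟩, rfl⟩
    exact ⟨k, by rw [pch_zpow, pch_apply, hk]⟩

lemma allOrbitsSize_pch (φ : α ≃ β) (σ : Equiv.Perm α) {m : ℕ}
    (h : allOrbitsSize σ m) : allOrbitsSize (pch φ σ) m := by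
  intro e
  have h2 := permOrbit_pch φ σ (φ.symm e)
  rw [Equiv.apply_symm_apply] at h2
  rw [h2, Set.ncard_image_of_injective _ φ.injective]
  exact h _

lemma orderOf_pch (φ : α ≃ β) (σ : Equiv.Perm α) : orderOf (pch φ σ) = orderOf σ :=
  orderOf_injective (pch φ).toMonoidHom (pch φ).injective σ


variable {G : Type*} [AddGroup G]

/-- translations as a monoid hom. -/
def alh (G : Type*) [AddGroup G] : Multiplicative G →* Equiv.Perm G where
  toFun k := Equiv.addLeft k.toAdd
  map_one' := by ext x; simp
  map_mul' k l := by ext x; simp [add_assoc]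

lemma alh_injective : Function.Injective (alh G) := by
  intro k l h
  have h0 := congrArg (fun (e : Equiv.Perm G) => e 0) h
  simpa [alh] using h0

lemma addLeft_zpow (k : G) (j : ℤ) : (Equiv.addLeft k) ^ j = Equiv.addLeft (j • k) := by
  have := map_zpow (alh G) (Multiplicative.ofAdd k) j
  simpa [alh, ← ofAdd_zsmul] using this

lemma addLeft_pow (k : G) (m : ℕ) : (Equiv.addLeft k) ^ m = Equiv.addLeft (m • k) := by
  have := addLeft_zpow k (m : ℤ)
  rwa [zpow_natCast, natCast_zsmul] at this

lemma orderOf_addLeft (k : G) : orderOf (Equiv.addLeft k) = addOrderOf k := by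
  have : Equiv.addLeft k = alh G (Multiplicative.ofAdd k) := rfl
  rw [this, orderOf_injective (alh G) alh_injective, orderOf_ofAdd_eq_addOrderOf]

lemma permOrbit_addLeft (k e : G) :
    permOrbit (Equiv.addLeft k) e = (fun m => m + e) '' (AddSubgroup.zmultiples k : Set G) := by
  ext f
  simp only [permOrbit, Set.mem_setOf_eq, Set.mem_image, SetLike.mem_coe,
    AddSubgroup.mem_zmultiples_iff]
  constructor
  · rintro ⟨j, hj⟩
    refine ⟨j • k, ⟨j, rfl⟩, ?_⟩
    rw [addLeft_zpow] at hj
    simpa using hj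
  · rintro ⟨g, ⟨j, rfl⟩, rfl⟩
    exact ⟨j, by rw [addLeft_zpow]; simp⟩

lemma ncard_permOrbit_addLeft (k e : G) :
    (permOrbit (Equiv.addLeft k) e).ncard = addOrderOf k := by
  rw [permOrbit_addLeft, Set.ncard_image_of_injective _ (add_left_injective e),
    ← Nat.card_coe_set_eq, ← Nat.card_zmultiples k]
  rfl

lemma allOrbitsSize_addLeft (k : G) : allOrbitsSize (Equiv.addLeft k) (addOrderOf k) :=
  fun e => ncard_permOrbit_addLeft k e



lemma perm_fix_pow {E : Type*} (f : Equiv.Perm E) (e : E) (h : f e = e) (m : ℕ) :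
    (f ^ m) e = e := by
  induction m with
  | zero => simp
  | succ m ih => rw [pow_succ, Equiv.Perm.mul_apply, h, ih]

lemma perm_fix_zpow {E : Type*} (f : Equiv.Perm E) (e : E) (h : f e = e) (j : ℤ) :
    (f ^ j) e = e := by
  rcases j with m | m
  · rw [Int.ofNat_eq_coe, zpow_natCast]; exact perm_fix_pow f e h m
  · rw [zpow_negSucc]
    have h1 : (f ^ (m + 1)) e = e := perm_fix_pow f e h (m + 1)
    nth_rewrite 1 [← h1]
    exact Equiv.symm_apply_apply _ _

lemma exists_conj_of_allOrbitsSize {n : ℕ} (hn : 0 < n) (c : Equiv.Perm (Fin n))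
    (hc : allOrbitsSize c n) :
    ∃ φ : ZMod n ≃ Fin n, c = pch φ (Equiv.addLeft 1) := by
  haveI : NeZero n := ⟨hn.ne'⟩
  set e₀ : Fin n := ⟨0, hn⟩ with he₀
  -- B0 : no short return times
  have B0 : ∀ d : ℕ, 0 < d → (c ^ d) e₀ = e₀ → n ≤ d := by
    intro d hd hde
    have hsub : permOrbit c e₀ ⊆ (fun r : ℕ => (c ^ r) e₀) '' Set.Iio d := by
      rintro f ⟨k, rfl⟩
      have hd' : (d : ℤ) ≠ 0 := by exact_mod_cast hd.ne'
      have h1 : 0 ≤ k % (d : ℤ) := Int.emod_nonneg k hd'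
      have h2 : k % (d : ℤ) < d := Int.emod_lt_of_pos k (by exact_mod_cast hd)
      refine ⟨(k % (d : ℤ)).toNat, by simp only [Set.mem_Iio]; omega, ?_⟩
      have hde' : (c ^ (d : ℤ)) e₀ = e₀ := by rw [zpow_natCast]; exact hde
      have hfix : ((c ^ (d : ℤ)) ^ (k / (d : ℤ))) e₀ = e₀ :=
        perm_fix_zpow _ _ hde' _
      have hsplit : (c ^ k) e₀ = (c ^ (k % (d : ℤ))) e₀ := by
        conv_lhs => rw [← Int.emod_add_mul_ediv k (d : ℤ)]
        rw [zpow_add, Equiv.Perm.mul_apply, zpow_mul, hfix]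
      show (c ^ (k % (d : ℤ)).toNat) e₀ = (c ^ k) e₀
      rw [hsplit]
      congr 1
      rw [← zpow_natCast c, Int.toNat_of_nonneg h1]
    have hfin : ((fun r : ℕ => (c ^ r) e₀) '' Set.Iio d).Finite :=
      (Set.finite_Iio d).image _
    have hle : (permOrbit c e₀).ncard ≤ d := by
      calc (permOrbit c e₀).ncard ≤ ((fun r : ℕ => (c ^ r) e₀) '' Set.Iio d).ncard :=
            Set.ncard_le_ncard hsub hfin
        _ ≤ (Set.Iio d).ncard := Set.ncard_image_le (Set.finite_Iio d)
        _ = d := by rw [← Finset.coe_range, Set.ncard_coe_finset, Finset.card_range]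
    rw [hc e₀] at hle
    exact hle
  -- B1 : c ^ n e₀ = e₀
  have B1 : (c ^ n) e₀ = e₀ := by
    have hninj : ¬ Function.Injective (fun r : Fin (n + 1) => (c ^ (r : ℕ)) e₀) := by
      intro hinj
      have := Fintype.card_le_of_injective _ hinj
      simp only [Fintype.card_fin] at this
      omega
    rw [Function.not_injective_iff] at hninj
    obtain ⟨r, t, hrt, hne⟩ := hninj
    have key : ∀ r t : Fin (n + 1), (r : ℕ) < (t : ℕ) →
        (c ^ (r : ℕ)) e₀ = (c ^ (t : ℕ)) e₀ → (c ^ n) e₀ = e₀ := by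
      intro r t hlt heq
      have hsplit : (c ^ (t : ℕ)) e₀ = (c ^ (r : ℕ)) ((c ^ ((t : ℕ) - (r : ℕ))) e₀) := by
        rw [← Equiv.Perm.mul_apply, ← pow_add]
        congr 2
        omega
      rw [hsplit] at heq
      have heq2 : (c ^ ((t : ℕ) - (r : ℕ))) e₀ = e₀ := ((c ^ (r : ℕ)).injective heq.symm)
      have hb := B0 _ (by omega) heq2
      have : (t : ℕ) - (r : ℕ) = n := by omega
      rwa [this] at heq2
    rcases lt_trichotomy (r : ℕ) (t : ℕ) with h | h | h
    · exact key r t h hrt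
    · exact absurd (Fin.ext h) hne
    · exact key t r h hrt.symm
  -- the bijection
  set g : ZMod n → Fin n := fun k => (c ^ k.val) e₀ with hg
  have hginj : Function.Injective g := by
    intro k l hkl
    by_contra hne
    have hvne : k.val ≠ l.val := fun h => hne (ZMod.val_injective n h)
    have key : ∀ k l : ZMod n, k.val < l.val → g k = g l → False := by
      intro k l hlt heq
      have hsplit : (c ^ l.val) e₀ = (c ^ k.val) ((c ^ (l.val - k.val)) e₀) := by
        rw [← Equiv.Perm.mul_apply, ← pow_add]
        congr 2
        omega
      rw [hg] at heq
      simp only at heq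
      rw [hsplit] at heq
      have heq2 : (c ^ (l.val - k.val)) e₀ = e₀ := ((c ^ k.val).injective heq.symm)
      have hb := B0 _ (by omega) heq2
      have := ZMod.val_lt l
      omega
    rcases lt_trichotomy k.val l.val with h | h | h
    · exact key k l h hkl
    · exact hvne h
    · exact key l k h hkl.symm
  have hgbij : Function.Bijective g := by
    rw [Fintype.bijective_iff_injective_and_card]
    exact ⟨hginj, by simp [ZMod.card]⟩
  set φ : ZMod n ≃ Fin n := Equiv.ofBijective g hgbij with hφ
  have hgnat : ∀ m : ℕ, (c ^ m) e₀ = g ((m : ZMod n)) := by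
    intro m
    have hval : ((m : ZMod n)).val = m % n := ZMod.val_natCast n m
    rw [hg]
    simp only [hval]
    conv_lhs => rw [← Nat.mod_add_div m n]
    rw [pow_add, Equiv.Perm.mul_apply, pow_mul, perm_fix_pow _ _ B1]
  refine ⟨φ, ?_⟩
  ext e
  obtain ⟨k, rfl⟩ := φ.surjective e
  have hl : c (φ k) = g (k + 1) := by
    have h1 : c (g k) = (c ^ (k.val + 1)) e₀ := by
      rw [pow_succ', Equiv.Perm.mul_apply]
    have h2 : ((k.val + 1 : ℕ) : ZMod n) = k + 1 := by
      push_cast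
      rw [ZMod.natCast_rightInverse k]
    have : c (g k) = g (k + 1) := by rw [h1, hgnat, h2]
    exact this
  have hr : (pch φ (Equiv.addLeft 1)) (φ k) = g (1 + k) := by
    rw [pch_apply]
    rfl
  rw [hl, hr, add_comm]

-- MAIN-CONSTRUCT
lemma construct {n : ℕ} (hn : 0 < n) {a b : ℕ} (i j : ZMod n)
    (hij : i + j = 1) (hi : addOrderOf i = a) (hj : addOrderOf j = b) :
    ∃ x y : Equiv.Perm (Fin n),
      allOrbitsSize x a ∧ allOrbitsSize y b ∧ allOrbitsSize (x * y) n ∧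
      Nat.card (Subgroup.closure ({x, y} : Set (Equiv.Perm (Fin n)))) = n := by
  haveI : NeZero n := ⟨hn.ne'⟩
  have hcard : Fintype.card (ZMod n) = n := ZMod.card n
  set φ : ZMod n ≃ Fin n := Fintype.equivFinOfCardEq hcard with hφ
  set x : Equiv.Perm (Fin n) := pch φ (Equiv.addLeft i) with hx
  set y : Equiv.Perm (Fin n) := pch φ (Equiv.addLeft j) with hy
  have hmul : x * y = pch φ (Equiv.addLeft 1) := by
    rw [hx, hy, ← map_mul]
    congr 1
    ext z
    simp only [Equiv.Perm.mul_apply, Equiv.coe_addLeft]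
    rw [← add_assoc, hij]
  refine ⟨x, y, ?_, ?_, ?_, ?_⟩
  · rw [← hi]; exact allOrbitsSize_pch φ _ (allOrbitsSize_addLeft i)
  · rw [← hj]; exact allOrbitsSize_pch φ _ (allOrbitsSize_addLeft j)
  · rw [hmul]
    have := allOrbitsSize_pch φ _ (allOrbitsSize_addLeft (1 : ZMod n))
    rwa [ZMod.addOrderOf_one] at this
  · -- closure = zpowers (x*y)
    have hxmem : x ∈ Subgroup.zpowers (x * y) := by
      rw [Subgroup.mem_zpowers_iff]
      refine ⟨(i.val : ℤ), ?_⟩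
      rw [hmul, ← map_zpow, addLeft_zpow]
      rw [hx]
      congr 2
      have : (i.val : ℤ) • (1 : ZMod n) = ((i.val : ℕ) : ZMod n) := by
        rw [natCast_zsmul, nsmul_eq_mul, mul_one]
      rw [this, ZMod.natCast_rightInverse i]
    have hymem : y ∈ Subgroup.zpowers (x * y) := by
      rw [Subgroup.mem_zpowers_iff]
      refine ⟨(j.val : ℤ), ?_⟩
      rw [hmul, ← map_zpow, addLeft_zpow]
      rw [hy]
      congr 2
      have : (j.val : ℤ) • (1 : ZMod n) = ((j.val : ℕ) : ZMod n) := by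
        rw [natCast_zsmul, nsmul_eq_mul, mul_one]
      rw [this, ZMod.natCast_rightInverse j]
    have heq : Subgroup.closure ({x, y} : Set (Equiv.Perm (Fin n))) = Subgroup.zpowers (x * y) := by
      apply le_antisymm
      · rw [Subgroup.closure_le]
        rintro z (rfl | rfl)
        · exact hxmem
        · exact hymem
      · rw [Subgroup.zpowers_le]
        exact mul_mem (Subgroup.subset_closure (by simp)) (Subgroup.subset_closure (by simp))
    rw [heq, Nat.card_zpowers, hmul, orderOf_pch, orderOf_addLeft, ZMod.addOrderOf_one]

-- MAIN-DECONSTRUCT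
lemma deconstruct {n : ℕ} (hn : 0 < n) (x y : Equiv.Perm (Fin n))
    (hxy : allOrbitsSize (x * y) n)
    (hcard : Nat.card (Subgroup.closure ({x, y} : Set (Equiv.Perm (Fin n)))) = n) :
    ∃ i j : ZMod n, i + j = 1 ∧
      (∀ m : ℕ, allOrbitsSize x m → addOrderOf i = m) ∧
      (∀ m : ℕ, allOrbitsSize y m → addOrderOf j = m) := by
  haveI : NeZero n := ⟨hn.ne'⟩
  obtain ⟨φ, hφ⟩ := exists_conj_of_allOrbitsSize hn (x * y) hxy
  have horder : orderOf (x * y) = n := by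
    rw [hφ, orderOf_pch, orderOf_addLeft, ZMod.addOrderOf_one]
  have hle : Subgroup.zpowers (x * y) ≤ Subgroup.closure ({x, y} : Set (Equiv.Perm (Fin n))) := by
    rw [Subgroup.zpowers_le]
    exact mul_mem (Subgroup.subset_closure (by simp)) (Subgroup.subset_closure (by simp))
  have heq : Subgroup.zpowers (x * y) = Subgroup.closure ({x, y} : Set (Equiv.Perm (Fin n))) := by
    apply SetLike.ext'
    apply Set.eq_of_subset_of_ncard_le hle
    · rw [← Nat.card_coe_set_eq, ← Nat.card_coe_set_eq]
      show Nat.card (Subgroup.closure ({x, y} : Set (Equiv.Perm (Fin n)))) ≤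
        Nat.card (Subgroup.zpowers (x * y))
      rw [hcard, Nat.card_zpowers, horder]
  have hxmem : x ∈ Subgroup.zpowers (x * y) := by
    rw [heq]; exact Subgroup.subset_closure (by simp)
  have hymem : y ∈ Subgroup.zpowers (x * y) := by
    rw [heq]; exact Subgroup.subset_closure (by simp)
  obtain ⟨k, hk⟩ := Subgroup.mem_zpowers_iff.mp hxmem
  obtain ⟨l, hl⟩ := Subgroup.mem_zpowers_iff.mp hymem
  set i : ZMod n := k • (1 : ZMod n) with hi
  set j : ZMod n := l • (1 : ZMod n) with hj
  have hxi : x = pch φ (Equiv.addLeft i) := by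
    rw [← hk, hφ, ← map_zpow, addLeft_zpow]
  have hyj : y = pch φ (Equiv.addLeft j) := by
    rw [← hl, hφ, ← map_zpow, addLeft_zpow]
  have hij : i + j = 1 := by
    have h1 : pch φ (Equiv.addLeft (i + j)) = pch φ (Equiv.addLeft 1) := by
      rw [← hφ, hxi, hyj, ← map_mul]
      congr 1
      ext z
      simp only [Equiv.Perm.mul_apply, Equiv.coe_addLeft]
      rw [add_assoc]
    have h2 : Equiv.addLeft (i + j) = Equiv.addLeft (1 : ZMod n) := (pch φ).injective h1
    have h3 := congrArg (fun (e : Equiv.Perm (ZMod n)) => e 0) h2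
    simpa using h3
  refine ⟨i, j, hij, ?_, ?_⟩
  · intro m hm
    rw [hxi] at hm
    have := hm (φ (0 : ZMod n))
    rw [permOrbit_pch, Set.ncard_image_of_injective _ φ.injective,
      ncard_permOrbit_addLeft] at this
    exact this
  · intro m hm
    rw [hyj] at hm
    have := hm (φ (0 : ZMod n))
    rw [permOrbit_pch, Set.ncard_image_of_injective _ φ.injective,
      ncard_permOrbit_addLeft] at this
    exact this

lemma combine (P : ℕ → ℤ → Prop)
    (hper : ∀ (r : ℕ) (s s' : ℤ), (r : ℤ) ∣ (s - s') → P r s → P r s') :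
    ∀ m : ℕ, 0 < m → (∀ r, r.Prime → r ∣ m → ∃ s, P r s) →
      ∃ s : ℤ, ∀ r, r.Prime → r ∣ m → P r s := by
  intro m
  induction m using Nat.strong_induction_on with
  | _ m IH =>
    intro hm hloc
    rcases eq_or_ne m 1 with rfl | hm1
    · exact ⟨0, fun r hr hrd => absurd (Nat.dvd_one.mp hrd) hr.ne_one⟩
    · obtain ⟨r₀, hr₀, hr₀m⟩ := Nat.exists_prime_and_dvd hm1
      set K := m.factorization r₀ with hK
      set m' := m / r₀ ^ K with hm'
      have hKpos : 0 < K := by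
        rw [hK]
        exact (Nat.Prime.factorization_pos_of_dvd hr₀ hm.ne' hr₀m)
      have hm'pos : 0 < m' := Nat.ordCompl_pos r₀ hm.ne'
      have hm'lt : m' < m := by
        apply Nat.div_lt_self hm
        exact Nat.one_lt_pow hKpos.ne' hr₀.one_lt
      have hndvd : ¬ r₀ ∣ m' := Nat.not_dvd_ordCompl hr₀ hm.ne'
      obtain ⟨s', hs'⟩ := IH m' hm'lt hm'pos
        (fun r hr hrd => hloc r hr (hrd.trans (Nat.ordCompl_dvd m r₀)))
      obtain ⟨s₀, hs₀⟩ := hloc r₀ hr₀ hr₀m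
      have hcop : IsCoprime (m' : ℤ) (r₀ : ℤ) := by
        rw [Int.isCoprime_iff_gcd_eq_one]
        exact_mod_cast (Nat.coprime_comm.mp ((Nat.Prime.coprime_iff_not_dvd hr₀).mpr hndvd))
      obtain ⟨u, v, huv⟩ := hcop
      set s : ℤ := s' + (m' : ℤ) * (u * (s₀ - s')) with hs
      refine ⟨s, fun r hr hrd => ?_⟩
      rcases eq_or_ne r r₀ with rfl | hne
      · apply hper r s₀ s _ hs₀
        have h2 : (1 : ℤ) - u * (m' : ℤ) = v * r := by linarith
        have h1 : s₀ - s = (s₀ - s') * (v * (r : ℤ)) := by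
          calc s₀ - s = (s₀ - s') * (1 - u * (m' : ℤ)) := by rw [hs]; ring
            _ = (s₀ - s') * (v * r) := by rw [h2]
        rw [h1]
        exact ⟨(s₀ - s') * v, by ring⟩
      · have hrm' : r ∣ m' := by
          have h1 : r ∣ r₀ ^ K * m' := by
            rwa [Nat.ordProj_mul_ordCompl_eq_self m r₀] 
          rcases (Nat.Prime.dvd_mul hr).mp h1 with h | h
          · exact absurd ((Nat.prime_dvd_prime_iff_eq hr hr₀).mp (hr.dvd_of_dvd_pow h)) hne
          · exact h
        apply hper r s' s _ (hs' r hr hrm')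
        have h1 : s' - s = -((m' : ℤ) * (u * (s₀ - s'))) := by rw [hs]; ring
        rw [h1]
        exact dvd_neg.mpr ((Int.natCast_dvd_natCast.mpr hrm').mul_right _)

end TreeAux

/-- A tree passport `[a^p, b^q, n]` admits a regular dessin iff `gcd(p, q) = 1`. -/

theorem tree_passport_regular_iff_gcd_one
    (n a b p q : ℕ) (hn : 0 < n) (ha : 0 < a) (hb : 0 < b) (hp : 0 < p) (hq : 0 < q)
    (hpa : n = p * a) (hqb : n = q * b)
    (hodd : Odd ((n : ℤ) - (p + q))) :
    Nat.gcd p q = 1 ↔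
      ∃ x y : Equiv.Perm (Fin n),
        allOrbitsSize x a ∧ allOrbitsSize y b ∧ allOrbitsSize (x * y) n ∧
        Nat.card (Subgroup.closure ({x, y} : Set (Equiv.Perm (Fin n)))) = n := by
  haveI : NeZero n := ⟨hn.ne'⟩
  constructor
  · -- gcd = 1 → regular dessin exists
    intro hgcd
    have hcop : IsCoprime (p : ℤ) (q : ℤ) := by
      rw [Int.isCoprime_iff_gcd_eq_one]
      exact_mod_cast hgcd
    obtain ⟨u', v', huv⟩ := hcop
    set u₀ : ℤ := u' with hu₀
    set v₀ : ℤ := v' with hv₀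
    have hbez : (p : ℤ) * u₀ + (q : ℤ) * v₀ = 1 := by rw [hu₀, hv₀]; linarith
    set P : ℕ → ℤ → Prop := fun r s =>
      ((a : ZMod r) = 0 → ((u₀ + q * s : ℤ) : ZMod r) ≠ 0) ∧
      ((b : ZMod r) = 0 → ((v₀ - p * s : ℤ) : ZMod r) ≠ 0) with hPdef
    have key : ∀ (r : ℕ) (z w : ℤ), (r : ℤ) ∣ z - w → ((z : ZMod r) = (w : ZMod r)) := by
      intro r z w h
      rw [ZMod.intCast_eq_intCast_iff]
      exact (Int.ModEq.symm (Int.modEq_iff_dvd.mpr h))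
    have hper : ∀ (r : ℕ) (s s' : ℤ), (r : ℤ) ∣ (s - s') → P r s → P r s' := by
      intro r s s' hdvd hPs
      constructor
      · intro h0
        have h1 := hPs.1 h0
        rwa [key r (u₀ + q * s) (u₀ + q * s')
          (by rw [show (u₀ + q * s) - (u₀ + q * s') = (q : ℤ) * (s - s') by ring]
              exact hdvd.mul_left _)] at h1
      · intro h0
        have h1 := hPs.2 h0
        rwa [key r (v₀ - p * s) (v₀ - p * s')
          (by rw [show (v₀ - p * s) - (v₀ - p * s') = -((p : ℤ) * (s - s')) by ring]
              exact dvd_neg.mpr (hdvd.mul_left _))] at h1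
    have hloc : ∀ r, r.Prime → r ∣ a * b → ∃ s, P r s := by
      intro r hr _
      haveI := Fact.mk hr
      have hone : (p : ZMod r) * (u₀ : ZMod r) + (q : ZMod r) * (v₀ : ZMod r) = 1 := by
        have h1 := congrArg (fun z : ℤ => ((z : ZMod r))) hbez
        push_cast at h1
        exact h1
    -- reduce to a choice in ZMod r
      suffices h : ∃ σ : ZMod r,
          ((a : ZMod r) = 0 → (u₀ : ZMod r) + (q : ZMod r) * σ ≠ 0) ∧
          ((b : ZMod r) = 0 → (v₀ : ZMod r) - (p : ZMod r) * σ ≠ 0) by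
        obtain ⟨σ, h1, h2⟩ := h
        refine ⟨(σ.val : ℤ), ?_, ?_⟩
        · intro h0
          have h3 := h1 h0
          push_cast
          rwa [ZMod.natCast_val, ZMod.cast_id]
        · intro h0
          have h3 := h2 h0
          push_cast
          rwa [ZMod.natCast_val, ZMod.cast_id]
      -- helper facts
      have solveq : (q : ZMod r) ≠ 0 → ∃ σ : ZMod r, (u₀ : ZMod r) + (q : ZMod r) * σ = 1 := by
        intro hq0
        exact ⟨(q : ZMod r)⁻¹ * (1 - u₀), by rw [mul_inv_cancel_left₀ hq0]; ring⟩
      have solvep : (p : ZMod r) ≠ 0 → ∃ σ : ZMod r, (v₀ : ZMod r) - (p : ZMod r) * σ = 1 := by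
        intro hp0
        exact ⟨(p : ZMod r)⁻¹ * (v₀ - 1), by rw [mul_inv_cancel_left₀ hp0]; ring⟩
      have hu0ne : (q : ZMod r) = 0 → (u₀ : ZMod r) ≠ 0 := by
        intro hq0 hcon
        rw [hq0, hcon] at hone
        simp at hone
      have hv0ne : (p : ZMod r) = 0 → (v₀ : ZMod r) ≠ 0 := by
        intro hp0 hcon
        rw [hp0, hcon] at hone
        simp at hone
      by_cases hA : (a : ZMod r) = 0
      · by_cases hB : (b : ZMod r) = 0
        · by_cases hP0 : (p : ZMod r) = 0
          · obtain ⟨σ, hσ⟩ := solveq (by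
              intro hq0
              rw [hP0, hq0] at hone
              simp at hone)
            refine ⟨σ, fun _ => by rw [hσ]; exact one_ne_zero, fun _ => ?_⟩
            rw [hP0, zero_mul, sub_zero]
            exact hv0ne hP0
          · by_cases hQ0 : (q : ZMod r) = 0
            · obtain ⟨σ, hσ⟩ := solvep hP0
              refine ⟨σ, fun _ => ?_, fun _ => by rw [hσ]; exact one_ne_zero⟩
              rw [hQ0, zero_mul, add_zero]
              exact hu0ne hQ0
            · -- r must be odd
              have hr2 : r ≠ 2 := by
                intro h2
                subst h2
                have h2a : 2 ∣ a := by rwa [ZMod.natCast_eq_zero_iff] at hA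
                have h2p : ¬ (2 ∣ p) := fun h =>
                  hP0 ((ZMod.natCast_eq_zero_iff p 2).mpr h)
                have h2q : ¬ (2 ∣ q) := fun h =>
                  hQ0 ((ZMod.natCast_eq_zero_iff q 2).mpr h)
                have h2n : 2 ∣ n := hpa ▸ (Dvd.dvd.mul_left h2a p)
                obtain ⟨w, hw⟩ := hodd
                omega
              have hcard3 : 3 ≤ Fintype.card (ZMod r) := by
                rw [ZMod.card]
                have := hr.two_le
                omega
              set σ₁ : ZMod r := -(u₀ : ZMod r) * (q : ZMod r)⁻¹ with hσ₁
              set σ₂ : ZMod r := (v₀ : ZMod r) * (p : ZMod r)⁻¹ with hσ₂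
              have hne : (({σ₁, σ₂} : Finset (ZMod r))ᶜ).Nonempty := by
                rw [← Finset.card_pos, Finset.card_compl]
                have hle2 : ({σ₁, σ₂} : Finset (ZMod r)).card ≤ 2 :=
                  (Finset.card_insert_le _ _).trans (by simp)
                omega
              obtain ⟨σ, hσ⟩ := hne
              rw [Finset.mem_compl, Finset.mem_insert, Finset.mem_singleton] at hσ
              push_neg at hσ
              refine ⟨σ, fun _ => ?_, fun _ => ?_⟩
              · intro hcon
                apply hσ.1
                have h4 : (q : ZMod r) * σ = -(u₀ : ZMod r) := by
                  have := hcon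
                  linear_combination this
                calc σ = (q : ZMod r)⁻¹ * ((q : ZMod r) * σ) := by
                        rw [inv_mul_cancel_left₀ hQ0]
                  _ = σ₁ := by rw [h4, hσ₁]; ring
              · intro hcon
                apply hσ.2
                have h4 : (p : ZMod r) * σ = (v₀ : ZMod r) := by
                  linear_combination -hcon
                calc σ = (p : ZMod r)⁻¹ * ((p : ZMod r) * σ) := by
                        rw [inv_mul_cancel_left₀ hP0]
                  _ = σ₂ := by rw [h4, hσ₂]; ring
        · -- hB false : second conjunct vacuous
          by_cases hQ0 : (q : ZMod r) = 0
          · exact ⟨0, fun _ => by rw [hQ0, zero_mul, add_zero]; exact hu0ne hQ0,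
              fun h => absurd h hB⟩
          · obtain ⟨σ, hσ⟩ := solveq hQ0
            exact ⟨σ, fun _ => by rw [hσ]; exact one_ne_zero, fun h => absurd h hB⟩
      · by_cases hB : (b : ZMod r) = 0
        · by_cases hP0 : (p : ZMod r) = 0
          · exact ⟨0, fun h => absurd h hA,
              fun _ => by rw [hP0, zero_mul, sub_zero]; exact hv0ne hP0⟩
          · obtain ⟨σ, hσ⟩ := solvep hP0
            exact ⟨σ, fun h => absurd h hA, fun _ => by rw [hσ]; exact one_ne_zero⟩
        · exact ⟨0, fun h => absurd h hA, fun h => absurd h hB⟩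
    obtain ⟨s, hs⟩ := TreeAux.combine P hper (a * b) (Nat.mul_pos ha hb) hloc
    set u : ℤ := u₀ + q * s with hu
    set v : ℤ := v₀ - p * s with hv
    have hsum : (p : ℤ) * u + (q : ℤ) * v = 1 := by rw [hu, hv, ← hbez]; ring
    have hua : Int.gcd (a : ℤ) u = 1 := by
      by_contra h
      obtain ⟨r, hr, hrd⟩ := Nat.exists_prime_and_dvd h
      have hra' : (r : ℤ) ∣ (a : ℤ) :=
        (Int.natCast_dvd_natCast.mpr hrd).trans (Int.gcd_dvd_left _ _)
      have hra : r ∣ a := Int.natCast_dvd_natCast.mp hra'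
      have hru : (r : ℤ) ∣ u :=
        (Int.natCast_dvd_natCast.mpr hrd).trans (Int.gcd_dvd_right _ _)
      exact (hs r hr (Dvd.dvd.mul_right hra b)).1
        ((ZMod.natCast_eq_zero_iff a r).mpr hra)
        ((ZMod.intCast_zmod_eq_zero_iff_dvd u r).mpr hru)
    have hvb : Int.gcd (b : ℤ) v = 1 := by
      by_contra h
      obtain ⟨r, hr, hrd⟩ := Nat.exists_prime_and_dvd h
      have hrb' : (r : ℤ) ∣ (b : ℤ) :=
        (Int.natCast_dvd_natCast.mpr hrd).trans (Int.gcd_dvd_left _ _)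
      have hrb : r ∣ b := Int.natCast_dvd_natCast.mp hrb'
      have hrv : (r : ℤ) ∣ v :=
        (Int.natCast_dvd_natCast.mpr hrd).trans (Int.gcd_dvd_right _ _)
      exact (hs r hr (Dvd.dvd.mul_left hrb a)).2
        ((ZMod.natCast_eq_zero_iff b r).mpr hrb)
        ((ZMod.intCast_zmod_eq_zero_iff_dvd v r).mpr hrv)
    -- additive orders
    have horder : ∀ (P0 Q0 : ℕ) (w : ℤ), 0 < P0 → n = P0 * Q0 → Int.gcd (Q0 : ℤ) w = 1 →
        addOrderOf (((P0 : ℤ) * w : ℤ) : ZMod n) = Q0 := by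
      intro P0 Q0 w hP0 hn' hw
      set z : ZMod n := (((P0 : ℤ) * w : ℤ) : ZMod n) with hz
      have h1 : Q0 • z = 0 := by
        rw [hz, nsmul_eq_mul,
          show ((Q0 : ℕ) : ZMod n) = (((Q0 : ℕ) : ℤ) : ZMod n) by push_cast; ring,
          ← Int.cast_mul, ZMod.intCast_zmod_eq_zero_iff_dvd, hn']
        push_cast
        exact ⟨w, by ring⟩
      have hdvd1 : addOrderOf z ∣ Q0 := addOrderOf_dvd_of_nsmul_eq_zero h1
      have h2 : addOrderOf z • z = 0 := addOrderOf_nsmul_eq_zero z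
      set t := addOrderOf z with ht
      have h3 : (((t : ℤ) * ((P0 : ℤ) * w) : ℤ) : ZMod n) = 0 := by
        rw [Int.cast_mul, show (((t : ℤ)) : ZMod n) = ((t : ℕ) : ZMod n) by push_cast; ring,
          ← nsmul_eq_mul]
        exact h2
      have h4 : (n : ℤ) ∣ (t : ℤ) * ((P0 : ℤ) * w) :=
        (ZMod.intCast_zmod_eq_zero_iff_dvd _ n).mp h3
      have h5 : ((Q0 : ℤ)) ∣ (t : ℤ) * w := by
        have h6 : ((P0 : ℤ)) * ((Q0 : ℤ)) ∣ ((P0 : ℤ)) * ((t : ℤ) * w) := by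
          rw [show ((P0 : ℤ)) * ((t : ℤ) * w) = (t : ℤ) * ((P0 : ℤ) * w) by ring]
          rw [show ((P0 : ℤ)) * ((Q0 : ℤ)) = ((n : ℕ) : ℤ) by rw [hn']; push_cast; ring]
          exact h4
        exact (mul_dvd_mul_iff_left (show (P0 : ℤ) ≠ 0 by exact_mod_cast hP0.ne')).mp h6
      have h7 : ((Q0 : ℤ)) ∣ (t : ℤ) :=
        (Int.isCoprime_iff_gcd_eq_one.mpr hw).dvd_of_dvd_mul_right h5
      exact Nat.dvd_antisymm hdvd1 (Int.natCast_dvd_natCast.mp h7)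
    have hai : addOrderOf (((p : ℤ) * u : ℤ) : ZMod n) = a := horder p a u hp hpa hua
    have hbj : addOrderOf (((q : ℤ) * v : ℤ) : ZMod n) = b := horder q b v hq hqb hvb
    have hij : (((p : ℤ) * u : ℤ) : ZMod n) + (((q : ℤ) * v : ℤ) : ZMod n) = 1 := by
      rw [← Int.cast_add, show (p : ℤ) * u + (q : ℤ) * v = 1 from hsum, Int.cast_one]
    exact TreeAux.construct hn _ _ hij hai hbj
  · -- regular dessin → gcd = 1
    rintro ⟨x, y, hx, hy, hxy, hcard⟩
    obtain ⟨i, j, hij, hxi, hyj⟩ := TreeAux.deconstruct hn x y hxy hcard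
    have hai : addOrderOf i = a := hxi a hx
    have hbj : addOrderOf j = b := hyj b hy
    have gcdeq : ∀ (z : ZMod n) (P0 Q0 : ℕ), 0 < Q0 → n = P0 * Q0 → addOrderOf z = Q0 →
        P0 ∣ z.val := by
      intro z P0 Q0 hQ0 hn' hz
      have hordi : addOrderOf z = n / Nat.gcd n z.val := by
        conv_lhs => rw [← ZMod.natCast_rightInverse z]
        exact ZMod.addOrderOf_coe z.val hn.ne'
      have hdvd : Nat.gcd n z.val ∣ n := Nat.gcd_dvd_left _ _
      have h1 : Nat.gcd n z.val * Q0 = n := by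
        rw [← hz, hordi]
        exact Nat.mul_div_cancel' hdvd
      have h2 : Nat.gcd n z.val = P0 := Nat.eq_of_mul_eq_mul_right hQ0 (h1.trans hn')
      exact h2 ▸ Nat.gcd_dvd_right n z.val
    have hpi : p ∣ i.val := gcdeq i p a ha hpa hai
    have hqj : q ∣ j.val := gcdeq j q b hb hqb hbj
    have hmod : (i.val + j.val) ≡ 1 [MOD n] := by
      rw [← ZMod.natCast_eq_natCast_iff]
      push_cast
      rw [ZMod.natCast_val, ZMod.cast_id, ZMod.natCast_val, ZMod.cast_id]
      exact hij
    have hdn : Nat.gcd p q ∣ n := (Nat.gcd_dvd_left p q).trans ⟨a, hpa⟩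
    have hmodd : (i.val + j.val) ≡ 1 [MOD Nat.gcd p q] := hmod.of_dvd hdn
    have h0 : (i.val + j.val) ≡ 0 [MOD Nat.gcd p q] :=
      Nat.modEq_zero_iff_dvd.mpr
        (dvd_add ((Nat.gcd_dvd_left p q).trans hpi) ((Nat.gcd_dvd_right p q).trans hqj))
    have h1 : (1 : ℕ) ≡ 0 [MOD Nat.gcd p q] := hmodd.symm.trans h0
    exact Nat.dvd_one.mp (Nat.modEq_zero_iff_dvd.mp h1)
end

section
/- Let b, q be positive integers, n = q·b, and suppose q·(b−1) is even (so that the genus of the passport [n, b^q, n] is an integer). Then there exist permutations x, y of Fin n such that x is an n-cycle, every orbit of y has size b, x*y is an n-cycle, and the subgroup of Equiv.Perm (Fin n) generated by x and y has cardinality n; i.e., the passport [n, b^q, n] always admits a regular dessin. -/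
section Aux

/-- Coprimality only depends on the residue. -/
lemma aux_coprime_of_modEq {a b m : ℕ} (h : a ≡ b [MOD m]) (ha : Nat.Coprime a m) :
    Nat.Coprime b m := by
  have h' : a % m = b % m := h
  have : Nat.gcd m a = Nat.gcd m b := by
    rw [Nat.gcd_rec m a, Nat.gcd_rec m b, h']
  unfold Nat.Coprime at *
  rw [Nat.gcd_comm] at ha ⊢
  rw [← this]; exact ha

/-- Key number-theoretic lemma: if `b` is odd or `q` is even, there is `k`
coprime to `b` with `q*k+1` also coprime to `b`. -/
lemma aux_key (b : ℕ) : ∀ q : ℕ, 0 < b → (Odd b ∨ Even q) →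
    ∃ k : ℕ, Nat.Coprime k b ∧ Nat.Coprime (q * k + 1) b := by
  induction b using Nat.recOnPosPrimePosCoprime with
  | zero => exact fun q h _ => absurd h (by simp)
  | one => exact fun q _ _ => ⟨1, Nat.coprime_one_right 1, Nat.coprime_one_right _⟩
  | prime_pow p i hp hi =>
    intro q _ hpar
    have hp' : p.Prime := hp
    suffices h : ∃ k : ℕ, Nat.Coprime k p ∧ Nat.Coprime (q * k + 1) p by
      obtain ⟨k, h1, h2⟩ := h
      exact ⟨k, h1.pow_right i, h2.pow_right i⟩
    by_cases hq : p ∣ q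
    · refine ⟨1, Nat.coprime_one_left p, ?_⟩
      rw [mul_one]
      rw [Nat.coprime_comm]
      refine (hp'.coprime_iff_not_dvd).2 fun hdvd => ?_
      have h1 : p ∣ 1 := by
        have := Nat.dvd_sub hdvd hq
        simpa using this
      exact hp'.one_lt.ne' (Nat.dvd_one.mp h1)
    · have hp2 : p ≠ 2 := by
        rintro rfl
        rcases hpar with hodd | heq
        · have : Even (2 ^ i) := Nat.even_pow.mpr ⟨even_two, hi.ne'⟩
          exact (Nat.not_even_iff_odd.mpr hodd) this
        · exact hq heq.two_dvd
      by_cases hq1 : p ∣ q + 1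
      · refine ⟨2, ?_, ?_⟩
        · rw [Nat.coprime_comm]
          refine (hp'.coprime_iff_not_dvd).2 fun hdvd => ?_
          exact hp2 ((Nat.prime_dvd_prime_iff_eq hp' Nat.prime_two).mp hdvd)
        · rw [Nat.coprime_comm]
          refine (hp'.coprime_iff_not_dvd).2 fun hdvd => ?_
          have h2 : p ∣ (q + 1) * 2 := hq1.mul_right 2
          have h3 : p ∣ 1 := by
            have h4 := Nat.dvd_sub h2 hdvd
            have he : (q + 1) * 2 - (q * 2 + 1) = 1 := by omega
            rwa [he] at h4
          exact hp'.one_lt.ne' (Nat.dvd_one.mp h3)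
      · refine ⟨1, Nat.coprime_one_left p, ?_⟩
        rw [mul_one, Nat.coprime_comm]
        exact (hp'.coprime_iff_not_dvd).2 hq1
  | coprime a c ha hc hcop iha ihc =>
    intro q _ hpar
    have hpara : Odd a ∨ Even q := by
      rcases hpar with hodd | heq
      · exact Or.inl ((Nat.odd_mul.mp hodd).1)
      · exact Or.inr heq
    have hparc : Odd c ∨ Even q := by
      rcases hpar with hodd | heq
      · exact Or.inl ((Nat.odd_mul.mp hodd).2)
      · exact Or.inr heq
    obtain ⟨k1, hk1a, hk1b⟩ := iha q (by omega) hpara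
    obtain ⟨k2, hk2a, hk2b⟩ := ihc q (by omega) hparc
    obtain ⟨k, hka, hkc⟩ := Nat.chineseRemainder hcop k1 k2
    refine ⟨k, ?_, ?_⟩
    · exact (aux_coprime_of_modEq hka.symm hk1a).mul_right (aux_coprime_of_modEq hkc.symm hk2a)
    · have h1 : q * k1 + 1 ≡ q * k + 1 [MOD a] := (hka.symm.mul_left q).add_right 1
      have h2 : q * k2 + 1 ≡ q * k + 1 [MOD c] := (hkc.symm.mul_left q).add_right 1
      exact (aux_coprime_of_modEq h1 hk1b).mul_right (aux_coprime_of_modEq h2 hk2b)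

variable {G : Type*}

/-- `Equiv.permCongr` as a `MulEquiv` on permutation groups. -/
def permCongrMul {α β : Type*} (ε : α ≃ β) : Equiv.Perm α ≃* Equiv.Perm β :=
  { ε.permCongr with
    map_mul' := fun p r => by
      ext x
      simp [Equiv.permCongr_apply, Equiv.Perm.mul_apply] }

lemma permOrbit_permCongr {α β : Type*} (ε : α ≃ β) (σ : Equiv.Perm α) (f : β) :
    permOrbit (ε.permCongr σ) f = ε '' permOrbit σ (ε.symm f) := by
  have hzpow : ∀ k : ℤ, (ε.permCongr σ) ^ k = ε.permCongr (σ ^ k) := by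
    intro k
    exact (map_zpow (permCongrMul ε).toMonoidHom σ k).symm
  ext g
  simp only [permOrbit, Set.mem_setOf_eq, Set.mem_image]
  constructor
  · rintro ⟨k, hk⟩
    refine ⟨(σ ^ k) (ε.symm f), ⟨k, rfl⟩, ?_⟩
    rw [hzpow k] at hk
    simpa using hk
  · rintro ⟨x, ⟨k, rfl⟩, rfl⟩
    exact ⟨k, by rw [hzpow k]; simp⟩

lemma allOrbitsSize_permCongr {α β : Type*} (ε : α ≃ β) (σ : Equiv.Perm α) (a : ℕ)
    (h : allOrbitsSize σ a) : allOrbitsSize (ε.permCongr σ) a := by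
  intro f
  rw [permOrbit_permCongr, Set.ncard_image_of_injective _ ε.injective]
  exact h _

lemma orderOf_addLeft [AddGroup G] (a : G) :
    orderOf (Equiv.addLeft a) = addOrderOf a := by
  let f : G →+ Additive (Equiv.Perm G) :=
    { toFun := fun g => Additive.ofMul (Equiv.addLeft g)
      map_zero' := by
        simp only [Equiv.addLeft_zero]
        rfl
      map_add' := fun g h => by
        simp only [Equiv.addLeft_add]
        rfl }
  have hf : Function.Injective f := by
    intro g h hgh
    have h2 : Equiv.addLeft g 0 = Equiv.addLeft h 0 :=
      congrArg (fun t : Additive (Equiv.Perm G) => (Additive.toMul t) 0) hgh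
    simpa using h2
  have := addOrderOf_injective f hf a
  rw [← addOrderOf_ofMul_eq_orderOf]
  exact this

lemma permOrbit_addLeft_ncard [AddCommGroup G] (a e : G) :
    (permOrbit (Equiv.addLeft a) e).ncard = addOrderOf a := by
  have him : permOrbit (Equiv.addLeft a) e
      = (fun g => g + e) '' ((AddSubgroup.zmultiples a : AddSubgroup G) : Set G) := by
    ext f
    simp only [permOrbit, Set.mem_setOf_eq, Set.mem_image, SetLike.mem_coe,
      AddSubgroup.mem_zmultiples_iff]
    constructor
    · rintro ⟨k, hk⟩
      refine ⟨k • a, ⟨k, rfl⟩, ?_⟩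
      rw [Equiv.zsmul_addLeft] at hk
      simpa [add_comm] using hk
    · rintro ⟨x, ⟨k, rfl⟩, rfl⟩
      exact ⟨k, by rw [Equiv.zsmul_addLeft]; simp [add_comm]⟩
  rw [him, Set.ncard_image_of_injective _ (add_left_injective e),
    ← Nat.card_coe_set_eq]
  rw [SetLike.coe_sort_coe]
  exact Nat.card_zmultiples a

end Aux

/-- The passport `[n, b^q, n]` always admits a regular dessin. -/
theorem passport_n_bq_n_admits_regular (b q : ℕ) (hb : 0 < b) (hq : 0 < q)
    (n : ℕ) (hn : n = q * b) (heven : Even (q * (b - 1))) :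
    ∃ x y : Equiv.Perm (Fin n),
      allOrbitsSize x n ∧ allOrbitsSize y b ∧ allOrbitsSize (x * y) n ∧
      Nat.card (Subgroup.closure ({x, y} : Set (Equiv.Perm (Fin n)))) = n := by
  subst hn
  set N := q * b with hN
  have hN0 : N ≠ 0 := by positivity
  haveI : NeZero N := ⟨hN0⟩
  -- number theory: find k
  have hpar : Odd b ∨ Even q := by
    rcases Nat.even_mul.mp heven with h | h
    · exact Or.inr h
    · left
      rcases Nat.even_or_odd b with hb2 | hb2
      · exfalso
        have : b - 1 ≠ 0 ∧ ¬ Even (b-1) → False := by tauto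
        have hodd : Odd (b - 1) := by
          rcases hb2 with ⟨t, ht⟩
          refine ⟨t - 1, by omega⟩
        rw [← Nat.not_even_iff_odd] at hodd
        exact hodd h
      · exact hb2
  obtain ⟨k, hkb, hkb'⟩ := aux_key b q hb hpar
  set m := q * k with hm
  have hgcd1 : N.gcd m = q := by
    rw [hN, hm, Nat.gcd_mul_left]
    have : b.gcd k = 1 := Nat.coprime_comm.mp hkb
    rw [this, mul_one]
  have hgcd2 : Nat.Coprime (m + 1) N := by
    have hcq : Nat.Coprime (m + 1) q := by
      have : Nat.Coprime (1 + q * k) q := (Nat.coprime_add_mul_left_left 1 q k).mpr (Nat.coprime_one_left q)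
      rwa [add_comm] at this
    have hcb : Nat.Coprime (m + 1) b := hkb'
    exact hcq.mul_right hcb
  -- construction over ZMod N
  let x0 : Equiv.Perm (ZMod N) := Equiv.addLeft (1 : ZMod N)
  let y0 : Equiv.Perm (ZMod N) := Equiv.addLeft ((m : ZMod N))
  have hx0 : allOrbitsSize x0 N := by
    intro e
    rw [permOrbit_addLeft_ncard, ZMod.addOrderOf_one]
  have hy0 : allOrbitsSize y0 b := by
    intro e
    rw [permOrbit_addLeft_ncard, ZMod.addOrderOf_coe m hN0, hgcd1, hN,
      Nat.mul_div_cancel_left b hq]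
  have hxy0 : allOrbitsSize (x0 * y0) N := by
    have hmul : x0 * y0 = Equiv.addLeft (((m + 1 : ℕ) : ZMod N)) := by
      rw [show ((m + 1 : ℕ) : ZMod N) = (1 : ZMod N) + (m : ZMod N) by push_cast; ring]
      exact (Equiv.addLeft_add _ _).symm
    intro e
    rw [hmul, permOrbit_addLeft_ncard, ZMod.addOrderOf_coe (m + 1) hN0]
    have : N.gcd (m + 1) = 1 := Nat.coprime_comm.mp hgcd2
    rw [this, Nat.div_one]
  have hy0x0 : y0 = x0 ^ m := by
    rw [show x0 ^ m = Equiv.addLeft (m • (1 : ZMod N)) from Equiv.nsmul_addLeft 1 m]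
    rw [Nat.smul_one_eq_cast]
  have hclos0 : Subgroup.closure ({x0, y0} : Set (Equiv.Perm (ZMod N)))
      = Subgroup.zpowers x0 := by
    apply le_antisymm
    · rw [Subgroup.closure_le]
      intro z hz
      simp only [Set.mem_insert_iff, Set.mem_singleton_iff] at hz
      rcases hz with rfl | rfl
      · exact Subgroup.mem_zpowers x0
      · rw [hy0x0]
        exact Subgroup.pow_mem _ (Subgroup.mem_zpowers x0) m
    · rw [Subgroup.zpowers_le]
      exact Subgroup.subset_closure (Set.mem_insert _ _)
  have hcard0 : Nat.card (Subgroup.closure ({x0, y0} : Set (Equiv.Perm (ZMod N)))) = N := by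
    rw [hclos0, Nat.card_zpowers, orderOf_addLeft, ZMod.addOrderOf_one]
  -- transfer to Fin N
  let ε : ZMod N ≃ Fin N := Fintype.equivFinOfCardEq (ZMod.card N)
  let φ := permCongrMul ε
  refine ⟨φ x0, φ y0, allOrbitsSize_permCongr ε x0 N hx0, allOrbitsSize_permCongr ε y0 b hy0,
    ?_, ?_⟩
  · have : φ x0 * φ y0 = φ (x0 * y0) := (map_mul φ x0 y0).symm
    rw [this]
    exact allOrbitsSize_permCongr ε (x0 * y0) N hxy0
  · have himg : ({φ x0, φ y0} : Set (Equiv.Perm (Fin N))) = ⇑φ.toMonoidHom '' {x0, y0} := by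
      rw [show (⇑φ.toMonoidHom : Equiv.Perm (ZMod N) → Equiv.Perm (Fin N)) = ⇑φ from rfl,
        Set.image_pair]
    rw [himg, ← MonoidHom.map_closure φ.toMonoidHom]
    rw [Nat.card_congr (Subgroup.equivMapOfInjective _ φ.toMonoidHom φ.injective).symm.toEquiv]
    exact hcard0
end

section
/- Let a, p be positive integers with n = p·a, and suppose n is odd (equivalently n − 2p is odd, so that the genus of the passport [a^p, a^p, n] is an integer). Then there exist permutations x, y of Fin n such that every orbit of x has size a, every orbit of y has size a, x*y is an n-cycle, and the subgroup of Equiv.Perm (Fin n) generated by x and y has cardinality n, if and only if p = 1 (equivalently a = n). That is, the passport [a^p, a^p, n] admits a regular dessin if and only if p = 1. -/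
lemma permOrbit_eq_orbit {E : Type*} (σ : Equiv.Perm E) (e : E) :
    permOrbit σ e = MulAction.orbit (Subgroup.zpowers σ) e := by
  ext f
  constructor
  · rintro ⟨k, rfl⟩
    exact ⟨⟨σ ^ k, Subgroup.zpow_mem _ (Subgroup.mem_zpowers σ) k⟩, rfl⟩
  · rintro ⟨⟨g, hg⟩, rfl⟩
    obtain ⟨k, rfl⟩ := Subgroup.mem_zpowers_iff.mp hg
    exact ⟨k, rfl⟩

lemma ncard_permOrbit {E : Type*} [Finite E] (σ : Equiv.Perm E) (e : E) :
    (permOrbit σ e).ncard = Function.minimalPeriod σ e := by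
  classical
  letI : Fintype ↥(MulAction.orbit (Subgroup.zpowers σ) e) := Fintype.ofFinite _
  have h : (σ • · : E → E) = ⇑σ := rfl
  rw [← h, permOrbit_eq_orbit, ← Nat.card_coe_set_eq,
    Nat.card_eq_fintype_card, ← MulAction.minimalPeriod_eq_card]

lemma orderOf_eq_of_allOrbitsSize {E : Type*} [Finite E] [Nonempty E] {σ : Equiv.Perm E} {a : ℕ}
    (h : allOrbitsSize σ a) : orderOf σ = a := by
  have hmp : ∀ e : E, Function.minimalPeriod σ e = a := fun e => by
    rw [← ncard_permOrbit σ e]; exact h e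
  have h1 : σ ^ a = 1 := by
    ext e
    have h2 : σ^[a] e = e := by
      conv_lhs => rw [← hmp e]
      exact Function.iterate_minimalPeriod
    simpa [← Equiv.Perm.coe_pow] using h2
  refine Nat.dvd_antisymm (orderOf_dvd_of_pow_eq_one h1) ?_
  obtain ⟨e⟩ := ‹Nonempty E›
  rw [← hmp e]
  apply Function.IsPeriodicPt.minimalPeriod_dvd
  show Function.IsFixedPt _ _
  simp [← Equiv.Perm.coe_pow, pow_orderOf_eq_one, Function.IsFixedPt]

/-- The passport `[a^p, a^p, n]` admits a regular dessin iff `p = 1`. -/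
theorem passport_ap_ap_n_regular_iff (a p n : ℕ) (ha : 0 < a) (hp : 0 < p)
    (hn : n = p * a) (hodd : Odd n) :
    (∃ x y : Equiv.Perm (Fin n),
      allOrbitsSize x a ∧ allOrbitsSize y a ∧ allOrbitsSize (x * y) n ∧
      Nat.card (Subgroup.closure ({x, y} : Set (Equiv.Perm (Fin n)))) = n) ↔ p = 1 := by
  have hn0 : 0 < n := hn ▸ Nat.mul_pos hp ha
  haveI : Nonempty (Fin n) := ⟨⟨0, hn0⟩⟩
  constructor
  · rintro ⟨x, y, hx, hy, hz, hcard⟩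
    have hoz : orderOf (x * y) = n := orderOf_eq_of_allOrbitsSize hz
    have hox : orderOf x = a := orderOf_eq_of_allOrbitsSize hx
    have hoy : orderOf y = a := orderOf_eq_of_allOrbitsSize hy
    have hzmem : x * y ∈ Subgroup.closure ({x, y} : Set (Equiv.Perm (Fin n))) :=
      mul_mem (Subgroup.subset_closure (by simp)) (Subgroup.subset_closure (by simp))
    have hle : Subgroup.zpowers (x * y) ≤ Subgroup.closure ({x, y} : Set (Equiv.Perm (Fin n))) :=
      Subgroup.zpowers_le.mpr hzmem
    have heq : Subgroup.zpowers (x * y) = Subgroup.closure ({x, y} : Set (Equiv.Perm (Fin n))) := by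
      apply Subgroup.eq_of_le_of_card_ge hle
      rw [hcard, Nat.card_zpowers, hoz]
    have hxmem : x ∈ Subgroup.zpowers (x * y) := by
      rw [heq]; exact Subgroup.subset_closure (by simp)
    have hymem : y ∈ Subgroup.zpowers (x * y) := by
      rw [heq]; exact Subgroup.subset_closure (by simp)
    obtain ⟨i, hi⟩ := Subgroup.mem_zpowers_iff.mp hxmem
    obtain ⟨j, hj⟩ := Subgroup.mem_zpowers_iff.mp hymem
    have ha' : (a : ℤ) ≠ 0 := by exact_mod_cast ha.ne'
    have key : ∀ (k : ℤ) (w : Equiv.Perm (Fin n)), (x * y) ^ k = w → orderOf w = a →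
        (p : ℤ) ∣ k := by
      intro k w hk hw
      have h1 : (x * y) ^ (k * (a : ℤ)) = 1 := by
        rw [zpow_mul, hk, zpow_natCast, ← hw, pow_orderOf_eq_one]
      have h2 : ((n : ℤ)) ∣ k * (a : ℤ) := by
        rw [← hoz]
        exact orderOf_dvd_iff_zpow_eq_one.mpr h1
      rw [hn] at h2
      push_cast at h2
      exact (mul_dvd_mul_iff_right ha').mp h2
    have hpi : (p : ℤ) ∣ i := key i x hi hox
    have hpj : (p : ℤ) ∣ j := key j y hj hoy
    have hij : ((n : ℤ)) ∣ (i + j - 1) := by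
      rw [← hoz, orderOf_dvd_iff_zpow_eq_one, zpow_sub, zpow_add, hi, hj, zpow_one,
        mul_inv_cancel]
    have hpn : (p : ℤ) ∣ (n : ℤ) := by
      exact_mod_cast Dvd.intro a hn.symm
    have hp1 : (p : ℤ) ∣ 1 := by
      have h3 : (p : ℤ) ∣ i + j := dvd_add hpi hpj
      have h4 : (p : ℤ) ∣ i + j - 1 := hpn.trans hij
      simpa using dvd_sub h3 h4
    have : p ∣ 1 := by exact_mod_cast hp1
    exact Nat.dvd_one.mp this
  · rintro rfl
    open Fin.CommRing in
    have han : n = a := by omega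
    subst han
    haveI : NeZero n := ⟨hn0.ne'⟩
    have key : ∀ g : Fin n, (∀ t : Fin n, ∃ k : ℤ, k • g = t) →
        allOrbitsSize (Equiv.addLeft g) n := by
      intro g hg e
      have horb : permOrbit (Equiv.addLeft g) e = Set.univ := by
        rw [Set.eq_univ_iff_forall]
        intro f
        obtain ⟨k, hk⟩ := hg (f - e)
        refine ⟨k, ?_⟩
        rw [Equiv.zsmul_addLeft, hk]
        show f - e + e = f
        abel
      rw [horb, Set.ncard_univ, Nat.card_eq_fintype_card, Fintype.card_fin]
    have h1 : allOrbitsSize (Equiv.addLeft (1 : Fin n)) n := by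
      apply key
      intro t
      refine ⟨(t.val : ℤ), ?_⟩
      rw [zsmul_one]
      push_cast
      rfl
    obtain ⟨m, hm⟩ := hodd
    have h21 : ((m + 1 : ℕ) : Fin n) * ((1 : Fin n) + 1) = 1 := by
      have e1 : (((m + 1) * 2 : ℕ) : Fin n) = ((n + 1 : ℕ) : Fin n) := by congr 1; omega
      push_cast at e1
      rw [Fin.natCast_self, zero_add] at e1
      calc ((m + 1 : ℕ) : Fin n) * ((1 : Fin n) + 1)
          = ((m : Fin n) + 1) * 2 := by push_cast; ring
        _ = 1 := e1
    have h2 : allOrbitsSize (Equiv.addLeft ((1 : Fin n) + 1)) n := by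
      apply key
      intro t
      refine ⟨((m + 1) * t.val : ℕ), ?_⟩
      rw [natCast_zsmul, nsmul_eq_mul]
      calc (((m + 1) * t.val : ℕ) : Fin n) * ((1 : Fin n) + 1)
          = (((m + 1 : ℕ) : Fin n) * ((1 : Fin n) + 1)) * ((t.val : ℕ) : Fin n) := by
            rw [Nat.cast_mul]; ring
        _ = t := by rw [h21, one_mul, Fin.cast_val_eq_self]
    refine ⟨Equiv.addLeft 1, Equiv.addLeft 1, h1, h1, ?_, ?_⟩
    · rw [← Equiv.addLeft_add]
      exact h2
    · have hset : ({Equiv.addLeft 1, Equiv.addLeft 1} : Set (Equiv.Perm (Fin n)))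
          = {Equiv.addLeft 1} := Set.pair_eq_singleton _
      rw [hset, ← Subgroup.zpowers_eq_closure, Nat.card_zpowers]
      exact orderOf_eq_of_allOrbitsSize h1
end

section
/- Let b, q be positive integers, n = b·q, and let m be a divisor of n with 2 ≤ m < n. Let x be the permutation of ZMod n given by k ↦ k + 1, and let I_m denote the number of permutations y of ZMod n such that every orbit of y has size b and y maps each residue class modulo m (each fiber of the natural reduction map ZMod n → ZMod m) onto a residue class modulo m (equivalently, the m residue classes modulo m form a system of blocks for the subgroup generated by x and y). Then, as an identity of rational numbers, I_m = (m! / b^q) · ((n/m)!)^m · S, where S is the sum over all finitely supported functions t : ℕ → ℕ satisfying ∑_d d·t(d) = m and such that t(d) ≠ 0 implies d ∣ b and m ∣ d·q, of the products ∏_{d with t(d) ≠ 0} (1 / (d^{t(d)} · t(d)!)) · ( d^{d·q/m} / ((d·q/m)!) )^{t(d)}. -/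
set_option linter.unusedSectionVars false
set_option linter.unusedVariables false
set_option maxHeartbeats 1000000

open Equiv Function

namespace ImAux

-- ## modular cast helpers
theorem castdvd {d b : ℕ} (h : d ∣ b) (a : ℕ) : ((a % b : ℕ) : ZMod d) = (a : ZMod d) := by
  conv_rhs => rw [← Nat.div_add_mod a b]
  push_cast
  rw [(ZMod.natCast_eq_zero_iff b d).mpr h]
  ring

theorem castval_add {d b : ℕ} [NeZero b] (h : d ∣ b) (z w : ZMod b) :
    (((z + w).val : ℕ) : ZMod d) = ((z.val : ℕ) : ZMod d) + ((w.val : ℕ) : ZMod d) := by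
  rw [ZMod.val_add, castdvd h]
  push_cast
  ring

theorem castval_one {d b : ℕ} [NeZero b] (h : d ∣ b) :
    (((1 : ZMod b).val : ℕ) : ZMod d) = 1 := by
  have h1 : (1 : ZMod b) = ((1 : ℕ) : ZMod b) := by push_cast; rfl
  rw [h1, ZMod.val_natCast, castdvd h]
  push_cast
  rfl

theorem perm_apply_inv_self {α : Type*} (f : Equiv.Perm α) (x : α) : f (f⁻¹ x) = x :=
  f.apply_symm_apply x


variable {S T : Type*}

theorem permOrbit_ncard [Fintype S] (y : Perm S) (e : S) :
    (permOrbit y e).ncard = Function.minimalPeriod (⇑y) e := by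
  classical
  have hper : e ∈ Function.periodicPts ⇑y := by
    refine ⟨orderOf y, orderOf_pos y, ?_⟩
    have : (y ^ orderOf y) e = e := by rw [pow_orderOf_eq_one]; rfl
    rwa [Equiv.Perm.coe_pow] at this
  have hpos : 0 < Function.minimalPeriod (⇑y) e :=
    Function.minimalPeriod_pos_of_mem_periodicPts hper
  have himg : permOrbit y e
      = (fun i => (⇑y)^[i] e) '' Set.Iio (Function.minimalPeriod (⇑y) e) := by
    ext f
    constructor
    · rintro ⟨k, rfl⟩
      have hsc : y.SameCycle e ((y ^ k) e) := ⟨k, rfl⟩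
      obtain ⟨i, _, hie⟩ := hsc.exists_pow_eq'
      refine ⟨i % Function.minimalPeriod (⇑y) e, Nat.mod_lt _ hpos, ?_⟩
      show (⇑y)^[i % Function.minimalPeriod (⇑y) e] e = (y ^ k) e
      rw [Function.iterate_mod_minimalPeriod_eq, ← Equiv.Perm.coe_pow]
      exact hie
    · rintro ⟨i, _, rfl⟩
      exact ⟨(i : ℤ), by show (y ^ (i:ℤ)) e = (⇑y)^[i] e; rw [zpow_natCast, Equiv.Perm.coe_pow]⟩
  rw [himg, Set.ncard_image_of_injOn Function.iterate_injOn_Iio_minimalPeriod,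
    ← Finset.coe_Iio, Set.ncard_coe_finset, Nat.card_Iio]

theorem allOrbitsSize_iff [Fintype S] (y : Perm S) (a : ℕ) :
    allOrbitsSize y a ↔ ∀ e, Function.minimalPeriod (⇑y) e = a := by
  unfold allOrbitsSize
  simp only [permOrbit_ncard]

/-- transport of minimal periods along an injective semiconjugacy -/
theorem minimalPeriod_transport {f : S → T} (hf : Function.Injective f)
    {y : S → S} {y' : T → T} (h : ∀ e, f (y e) = y' (f e)) (e : S) :
    Function.minimalPeriod y' (f e) = Function.minimalPeriod y e := by
  have hsc : Function.Semiconj f y y' := h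
  have key : ∀ n : ℕ, Function.IsPeriodicPt y n e ↔ Function.IsPeriodicPt y' n (f e) := by
    intro n
    have hit : f (y^[n] e) = y'^[n] (f e) := (hsc.iterate_right n).eq e
    constructor
    · intro hp
      have : y^[n] e = e := hp
      unfold Function.IsPeriodicPt Function.IsFixedPt
      rw [← hit, this]
    · intro hp
      have : y'^[n] (f e) = f e := hp
      have : f (y^[n] e) = f e := by rw [hit, this]
      exact hf this
  have h1 : Function.IsPeriodicPt y (Function.minimalPeriod y' (f e)) e :=
    (key _).mpr (Function.iterate_minimalPeriod)
  have h2 : Function.IsPeriodicPt y' (Function.minimalPeriod y e) (f e) :=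
    (key _).mp (Function.iterate_minimalPeriod)
  exact Nat.dvd_antisymm h2.minimalPeriod_dvd h1.minimalPeriod_dvd

theorem minimalPeriod_addRight (l : ℕ) [NeZero l] (z : ZMod l) :
    Function.minimalPeriod (· + (1 : ZMod l)) z = l := by
  have key : ∀ n : ℕ, (· + (1 : ZMod l))^[n] z = z + (n : ZMod l) := by
    intro n
    induction n with
    | zero => simp
    | succ k ih => rw [Function.iterate_succ_apply', ih]; push_cast; ring
  have h1 : Function.IsPeriodicPt (· + (1 : ZMod l)) l z := by
    unfold Function.IsPeriodicPt Function.IsFixedPt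
    rw [key, ZMod.natCast_self, add_zero]
  have h3 : ((Function.minimalPeriod (· + (1 : ZMod l)) z : ℕ) : ZMod l) = 0 := by
    have h4 := Function.iterate_minimalPeriod (f := (· + (1 : ZMod l))) (x := z)
    rw [key] at h4
    have h5 : z + ((Function.minimalPeriod (· + (1 : ZMod l)) z : ℕ) : ZMod l) = z + 0 := by
      rw [add_zero]; exact h4
    exact add_left_cancel h5
  exact Nat.dvd_antisymm h1.minimalPeriod_dvd
    ((ZMod.natCast_eq_zero_iff _ _).mp h3)

theorem exists_canonical [Fintype S] (y : Perm S) (c k : ℕ) (hc : 0 < c)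
    (hy : ∀ e, Function.minimalPeriod (⇑y) e = c)
    (hcard : Fintype.card S = c * k) :
    ∃ ρ : (ZMod c × Fin k) ≃ S, ∀ u v, y (ρ (u, v)) = ρ (u + 1, v) := by
  classical
  haveI : NeZero c := ⟨hc.ne'⟩
  let sd : Setoid S := ⟨y.SameCycle,
    ⟨fun x => Equiv.Perm.SameCycle.refl y x, fun h => h.symm, fun h h' => h.trans h'⟩⟩
  let Q := Quotient sd
  haveI : Fintype Q := Fintype.ofFinite Q
  have hyc : ∀ o : S, (⇑y)^[c] o = o := by
    intro o
    have := Function.iterate_minimalPeriod (f := ⇑y) (x := o)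
    rwa [hy o] at this
  let φ : ZMod c × Q → S := fun p => (⇑y)^[(p.1.val)] p.2.out
  have hsurj : Function.Surjective φ := by
    intro e
    have hrel : y.SameCycle (⟦e⟧ : Q).out e := Quotient.exact (Quotient.out_eq (⟦e⟧ : Q))
    obtain ⟨i, _, hie⟩ := hrel.exists_pow_eq'
    refine ⟨((i : ZMod c), (⟦e⟧ : Q)), ?_⟩
    show (⇑y)^[((i : ZMod c)).val] _ = e
    rw [ZMod.val_natCast]
    have hmp : i % Function.minimalPeriod (⇑y) ((⟦e⟧ : Q).out)
        = i % c := by rw [hy]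
    rw [← hmp, Function.iterate_mod_minimalPeriod_eq, ← Equiv.Perm.coe_pow]
    exact hie
  have hinj : Function.Injective φ := by
    rintro ⟨u, ω⟩ ⟨u', ω'⟩ hφ
    simp only [φ] at hφ
    have hsc : y.SameCycle ω.out ω'.out := by
      have h1 : y.SameCycle ω.out ((⇑y)^[u.val] ω.out) := ⟨(u.val : ℤ), by
        rw [zpow_natCast, Equiv.Perm.coe_pow]⟩
      have h2 : y.SameCycle ω'.out ((⇑y)^[u'.val] ω'.out) := ⟨(u'.val : ℤ), by
        rw [zpow_natCast, Equiv.Perm.coe_pow]⟩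
      rw [hφ] at h1
      exact h1.trans h2.symm
    have hωω : ω = ω' := by
      rw [← Quotient.out_eq ω, ← Quotient.out_eq ω']
      exact Quotient.sound hsc
    subst hωω
    have hval : u.val = u'.val := by
      apply Function.iterate_injOn_Iio_minimalPeriod (f := ⇑y) (x := ω.out)
      · rw [hy]; exact Set.mem_Iio.mpr (ZMod.val_lt u)
      · rw [hy]; exact Set.mem_Iio.mpr (ZMod.val_lt u')
      · exact hφ
    have : (u.val : ZMod c) = (u'.val : ZMod c) := by rw [hval]
    rw [ZMod.natCast_rightInverse u, ZMod.natCast_rightInverse u'] at this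
    rw [this]
  let e0 : (ZMod c × Q) ≃ S := Equiv.ofBijective φ ⟨hinj, hsurj⟩
  have hcardQ : Fintype.card Q = k := by
    have h1 : Fintype.card S = Fintype.card (ZMod c × Q) := Fintype.card_congr e0.symm
    rw [Fintype.card_prod, ZMod.card] at h1
    rw [hcard] at h1
    exact (Nat.eq_of_mul_eq_mul_left hc h1).symm
  let eq : Fin k ≃ Q := Fintype.equivOfCardEq (by rw [Fintype.card_fin, hcardQ])
  refine ⟨(Equiv.prodCongr (Equiv.refl (ZMod c)) eq).trans e0, ?_⟩
  intro u v
  show y ((⇑y)^[u.val] (eq v).out) = (⇑y)^[(u+1).val] (eq v).out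
  have h5 : (u + 1).val = (u.val + 1) % c := by
    rw [← ZMod.val_natCast]
    congr 1
    push_cast
    rw [ZMod.natCast_rightInverse u]
  rw [h5]
  have h6 := Function.iterate_mod_minimalPeriod_eq (f := ⇑y) (x := (eq v).out)
    (n := u.val + 1)
  rw [hy] at h6
  rw [h6, Function.iterate_succ_apply']

theorem card_valCast_fiber {M N : ℕ} [NeZero N] (h : M ∣ N) (hM : 0 < M) (i : ZMod M) :
    Fintype.card {z : ZMod N // ((z.val : ℕ) : ZMod M) = i} = N / M := by
  classical
  haveI : NeZero M := ⟨hM.ne'⟩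
  have hN : 0 < N := Nat.pos_of_ne_zero (NeZero.ne N)
  have hMN : M * (N / M) = N := Nat.mul_div_cancel' h
  refine (Fintype.card_congr (Equiv.symm ?_)).trans (Fintype.card_fin (N/M))
  refine Equiv.ofBijective (fun j => ⟨((i.val + M * j : ℕ) : ZMod N), ?_⟩) ⟨?_, ?_⟩
  · rw [ZMod.val_natCast, castdvd h]
    push_cast
    rw [ZMod.natCast_self]
    simp [ZMod.natCast_rightInverse i]
  · intro j j' hjj
    have hlt : ∀ jj : Fin (N/M), i.val + M * jj < N := by
      intro jj
      have h1 : i.val < M := ZMod.val_lt i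
      have h2 : jj.val + 1 ≤ N / M := jj.isLt
      calc i.val + M * jj.val < M + M * jj.val := by omega
        _ = M * (jj.val + 1) := by ring
        _ ≤ M * (N / M) := Nat.mul_le_mul_left M h2
        _ = N := hMN
    have := congrArg (fun z : {z : ZMod N // _} => (z : ZMod N).val) hjj
    simp only [ZMod.val_natCast] at this
    rw [Nat.mod_eq_of_lt (hlt j), Nat.mod_eq_of_lt (hlt j')] at this
    have h7 : M * (j : ℕ) = M * (j' : ℕ) := by omega
    exact Fin.ext (Nat.eq_of_mul_eq_mul_left hM h7)
  · rintro ⟨z, hz⟩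
    have hmod : z.val % M = i.val := by
      rw [← ZMod.val_natCast, hz]
    have hj : z.val / M < N / M := Nat.div_lt_div_of_lt_of_dvd h (ZMod.val_lt z)
    refine ⟨⟨z.val / M, hj⟩, ?_⟩
    apply Subtype.ext
    show ((i.val + M * (z.val / M) : ℕ) : ZMod N) = z
    rw [← hmod, Nat.mod_add_div]
    exact ZMod.natCast_rightInverse z

theorem card_castHom_fiber {M N : ℕ} [NeZero N] (h : M ∣ N) (hM : 0 < M) (i : ZMod M) :
    Fintype.card {z : ZMod N // ZMod.castHom h (ZMod M) z = i} = N / M := by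
  haveI : NeZero M := ⟨hM.ne'⟩
  rw [← card_valCast_fiber h hM i]
  apply Fintype.card_congr
  apply Equiv.subtypeEquivRight
  intro z
  rw [ZMod.castHom_apply, ZMod.natCast_val]

section Blocks
variable {E F : Type*} [Fintype E] [Fintype F] [DecidableEq E] [DecidableEq F]

def BlocksTo (π : E → F) (h : Perm E) : Prop := ∀ e e', π e = π e' → π (h e) = π (h e')

variable {π : E → F}

theorem BlocksTo.mul {h h' : Perm E} (hh : BlocksTo π h) (hh' : BlocksTo π h') :
    BlocksTo π (h * h') := fun e e' he => hh _ _ (hh' _ _ he)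

theorem BlocksTo.one : BlocksTo π 1 := fun _ _ he => he

theorem BlocksTo.pow {h : Perm E} (hh : BlocksTo π h) (n : ℕ) : BlocksTo π (h ^ n) := by
  induction n with
  | zero => exact fun _ _ he => he
  | succ k ih => rw [pow_succ]; exact ih.mul hh

theorem BlocksTo.inv {h : Perm E} (hh : BlocksTo π h) : BlocksTo π h⁻¹ := by
  have ho : 0 < orderOf h := orderOf_pos h
  have h2 : h * h ^ (orderOf h - 1) = 1 := by
    rw [← pow_succ', Nat.sub_add_cancel ho]
    exact pow_orderOf_eq_one h
  have h1 : h⁻¹ = h ^ (orderOf h - 1) := (eq_inv_of_mul_eq_one_right h2).symm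
  rw [h1]; exact hh.pow _

theorem tau_unique {h : Perm E} (τ τ' : Perm F)
    (h1 : ∀ e, π (h e) = τ (π e)) (h2 : ∀ e, π (h e) = τ' (π e))
    (hsur : Function.Surjective π) : τ = τ' := by
  ext i
  obtain ⟨e, rfl⟩ := hsur i
  rw [← h1 e, h2 e]

theorem exists_tau (hsur : Function.Surjective π) {h : Perm E} (hh : BlocksTo π h) :
    ∃ τ : Perm F, ∀ e, π (h e) = τ (π e) := by
  classical
  have hrep : ∀ i : F, π (hsur i).choose = i := fun i => (hsur i).choose_spec
  set fm : F → F := fun i => π (h (hsur i).choose) with hfm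
  have hspec : ∀ e, π (h e) = fm (π e) := fun e => hh e _ (hrep (π e)).symm
  have hsurfm : Function.Surjective fm := by
    intro j
    obtain ⟨e0, he0⟩ := hsur j
    refine ⟨π (h⁻¹ e0), ?_⟩
    rw [← hspec (h⁻¹ e0)]
    simp [he0]
  exact ⟨Equiv.ofBijective fm ⟨(Finite.injective_iff_surjective).mpr hsurfm, hsurfm⟩,
    fun e => hspec e⟩

/-- glue fiberwise equivalences over a base bijection -/
def glueEquiv {E' F' : Type*} (π : E → F) (π' : E' → F') (β : F ≃ F')
    (θ : ∀ i, {e // π e = i} ≃ {e' // π' e' = β i}) : E ≃ E' :=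
  (Equiv.sigmaFiberEquiv π).symm.trans ((Equiv.sigmaCongr β θ).trans (Equiv.sigmaFiberEquiv π'))

theorem glueEquiv_apply {E' F' : Type*} (π : E → F) (π' : E' → F') (β : F ≃ F')
    (θ : ∀ i, {e // π e = i} ≃ {e' // π' e' = β i}) (e : E) :
    glueEquiv π π' β θ e = ((θ (π e)) ⟨e, rfl⟩).val := rfl

theorem glueEquiv_pi {E' F' : Type*} (π : E → F) (π' : E' → F') (β : F ≃ F')
    (θ : ∀ i, {e // π e = i} ≃ {e' // π' e' = β i}) (e : E) :
    π' (glueEquiv π π' β θ e) = β (π e) := ((θ (π e)) ⟨e, rfl⟩).2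

def blockSubgroup (π : E → F) : Subgroup (Perm E) where
  carrier := {h | BlocksTo π h}
  mul_mem' := fun ha hb => ha.mul hb
  one_mem' := fun _ _ he => he
  inv_mem' := fun ha => ha.inv

theorem card_blockSubgroup (s : ℕ) (hs : 0 < s)
    (hfib : ∀ i : F, Fintype.card {e // π e = i} = s) :
    Nat.card (blockSubgroup π) =
      (Fintype.card F).factorial * (s.factorial) ^ (Fintype.card F) := by
  classical
  have hsur : Function.Surjective π := by
    intro i
    have : 0 < Fintype.card {e // π e = i} := by rw [hfib]; exact hs
    obtain ⟨⟨e, he⟩⟩ := Fintype.card_pos_iff.mp this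
    exact ⟨e, he⟩
  -- the homomorphism to Perm F
  have hmul : ∀ (a b : blockSubgroup π),
      (∀ e, π ((a : Perm E) e) = (exists_tau hsur a.2).choose (π e)) := by
    intro a _; exact (exists_tau hsur a.2).choose_spec
  let Φ : blockSubgroup π →* Perm F := MonoidHom.mk'
    (fun h => (exists_tau hsur h.2).choose)
    (by
      intro a b
      apply tau_unique _ _ (exists_tau hsur (a*b).2).choose_spec _ hsur
      intro e
      have h1 := (exists_tau hsur a.2).choose_spec
      have h2 := (exists_tau hsur b.2).choose_spec
      show π ((a : Perm E) ((b : Perm E) e)) = _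
      rw [h1, h2]; rfl)
  have hΦsur : Function.Surjective Φ := by
    intro τ
    let θ : ∀ i : F, {e // π e = i} ≃ {e' // π e' = τ i} := fun i =>
      Fintype.equivOfCardEq (by rw [hfib, hfib])
    let h : Perm E := glueEquiv π π τ θ
    have hbl : BlocksTo π h := by
      intro e e' he
      rw [glueEquiv_pi π π τ θ, glueEquiv_pi π π τ θ, he]
    refine ⟨⟨h, hbl⟩, ?_⟩
    apply tau_unique _ _ (exists_tau hsur hbl).choose_spec (glueEquiv_pi π π τ θ) hsur
  -- kernel
  have hker : ∀ h : blockSubgroup π, h ∈ Φ.ker ↔ ∀ e, π ((h : Perm E) e) = π e := by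
    intro h
    constructor
    · intro hk e
      have := (exists_tau hsur h.2).choose_spec e
      rw [show (exists_tau hsur h.2).choose = Φ h from rfl, hk] at this
      simpa using this
    · intro hid
      show Φ h = 1
      exact tau_unique _ _ (exists_tau hsur h.2).choose_spec (by simpa using hid) hsur
  let κ : Φ.ker ≃ (∀ i : F, Perm {e // π e = i}) := by
    refine ⟨fun h i => Equiv.Perm.subtypePerm (h : Perm E)
        (fun e => ?_), fun θ => ⟨⟨glueEquiv π π (Equiv.refl F) θ, ?_⟩, ?_⟩, ?_, ?_⟩
    · constructor
      · intro he; rw [← he]; exact ((hker h.1).mp h.2 e).symm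
      · intro he; rw [← he]; exact (hker h.1).mp h.2 e
    · intro e e' he
      rw [glueEquiv_pi π π (Equiv.refl F) θ, glueEquiv_pi π π (Equiv.refl F) θ, he]
    · rw [hker]
      intro e
      exact glueEquiv_pi π π (Equiv.refl F) θ e
    · intro h
      apply Subtype.ext; apply Subtype.ext; ext e
      rfl
    · intro θ
      funext i
      ext ⟨e, he⟩
      subst he
      rfl
  -- counting
  have h1 := Subgroup.card_eq_card_quotient_mul_card_subgroup (Φ.ker)
  have h2 : Nat.card (blockSubgroup π ⧸ Φ.ker) = Nat.card (Perm F) := by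
    rw [Nat.card_congr (QuotientGroup.quotientKerEquivRange Φ).toEquiv]
    rw [Nat.card_congr (Equiv.subtypeUnivEquiv (by
      intro τ; exact (MonoidHom.range_eq_top.mpr hΦsur) ▸ Subgroup.mem_top τ))]
  have h3 : Nat.card Φ.ker = s.factorial ^ (Fintype.card F) := by
    rw [Nat.card_congr κ, Nat.card_eq_fintype_card, Fintype.card_pi]
    have : ∀ i : F, Fintype.card (Perm {e // π e = i}) = s.factorial := by
      intro i; rw [Fintype.card_perm, hfib]
    rw [Finset.prod_congr rfl (fun i _ => this i), Finset.prod_const, Finset.card_univ]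
  rw [h1, h2, h3, Nat.card_eq_fintype_card, Fintype.card_perm]

end Blocks

-- ## counting all-orbit-size permutations
theorem card_dvd_of_allPeriods {S : Type*} [Fintype S] (y : Perm S) (c : ℕ) (hc : 0 < c)
    (hy : ∀ e, Function.minimalPeriod (⇑y) e = c) : c ∣ Fintype.card S := by
  classical
  haveI : NeZero c := ⟨hc.ne'⟩
  let sd : Setoid S := ⟨y.SameCycle,
    ⟨fun x => Equiv.Perm.SameCycle.refl y x, fun h => h.symm, fun h h' => h.trans h'⟩⟩
  haveI : Fintype (Quotient sd) := Fintype.ofFinite _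
  let φ : ZMod c × Quotient sd → S := fun p => (⇑y)^[(p.1.val)] p.2.out
  have hsurj : Function.Surjective φ := by
    intro e
    have hrel : y.SameCycle (⟦e⟧ : Quotient sd).out e :=
      Quotient.exact (Quotient.out_eq (⟦e⟧ : Quotient sd))
    obtain ⟨i, _, hie⟩ := hrel.exists_pow_eq'
    refine ⟨((i : ZMod c), (⟦e⟧ : Quotient sd)), ?_⟩
    show (⇑y)^[((i : ZMod c)).val] _ = e
    rw [ZMod.val_natCast]
    have hmp : i % Function.minimalPeriod (⇑y) ((⟦e⟧ : Quotient sd).out) = i % c := by rw [hy]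
    rw [← hmp, Function.iterate_mod_minimalPeriod_eq, ← Equiv.Perm.coe_pow]
    exact hie
  have hinj : Function.Injective φ := by
    rintro ⟨u, ω⟩ ⟨u', ω'⟩ hφ
    simp only [φ] at hφ
    have hsc : y.SameCycle ω.out ω'.out := by
      have h1 : y.SameCycle ω.out ((⇑y)^[u.val] ω.out) := ⟨(u.val : ℤ), by
        rw [zpow_natCast, Equiv.Perm.coe_pow]⟩
      have h2 : y.SameCycle ω'.out ((⇑y)^[u'.val] ω'.out) := ⟨(u'.val : ℤ), by
        rw [zpow_natCast, Equiv.Perm.coe_pow]⟩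
      rw [hφ] at h1
      exact h1.trans h2.symm
    have hωω : ω = ω' := by
      rw [← Quotient.out_eq ω, ← Quotient.out_eq ω']
      exact Quotient.sound hsc
    subst hωω
    have hval : u.val = u'.val := by
      apply Function.iterate_injOn_Iio_minimalPeriod (f := ⇑y) (x := ω.out)
      · rw [hy]; exact Set.mem_Iio.mpr (ZMod.val_lt u)
      · rw [hy]; exact Set.mem_Iio.mpr (ZMod.val_lt u')
      · exact hφ
    have huu : (u.val : ZMod c) = (u'.val : ZMod c) := by rw [hval]
    rw [ZMod.natCast_rightInverse u, ZMod.natCast_rightInverse u'] at huu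
    rw [huu]
  have := Fintype.card_congr (Equiv.ofBijective φ ⟨hinj, hsurj⟩)
  rw [Fintype.card_prod, ZMod.card] at this
  exact ⟨_, this.symm⟩

section Count
variable {F : Type*} [Fintype F] [DecidableEq F]

theorem mp_pos (σ : Perm F) (f : F) : 0 < Function.minimalPeriod (⇑σ) f := by
  apply Function.minimalPeriod_pos_of_mem_periodicPts
  refine ⟨orderOf σ, orderOf_pos σ, ?_⟩
  have : (σ ^ orderOf σ) f = f := by rw [pow_orderOf_eq_one]; rfl
  rwa [Equiv.Perm.coe_pow] at this

theorem mp_le_card (σ : Perm F) (f : F) :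
    Function.minimalPeriod (⇑σ) f ≤ Fintype.card F := by
  rw [← permOrbit_ncard]
  calc (permOrbit σ f).ncard ≤ (Set.univ : Set F).ncard :=
        Set.ncard_le_ncard (Set.subset_univ _) (Set.finite_univ)
    _ = Fintype.card F := by rw [Set.ncard_univ, Nat.card_eq_fintype_card]

theorem mp_apply_self (σ : Perm F) (f : F) :
    Function.minimalPeriod (⇑σ) (σ f) = Function.minimalPeriod (⇑σ) f :=
  minimalPeriod_transport σ.injective (fun _ => rfl) f

theorem mp_subtypePerm (σ : Perm F) {p : F → Prop} (hp : ∀ x, p (σ x) ↔ p x) (f : {x // p x}) :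
    Function.minimalPeriod (⇑(σ.subtypePerm hp)) f = Function.minimalPeriod (⇑σ) f.val :=
  (minimalPeriod_transport Subtype.val_injective (fun _ => rfl) f).symm

noncomputable def sizeCount (σ : Perm F) (d : ℕ) : ℕ :=
  Nat.card {f : F // Function.minimalPeriod (⇑σ) f = d}

theorem exists_of_sizeCount_ne {σ : Perm F} {d : ℕ} (h : sizeCount σ d ≠ 0) :
    ∃ f : F, Function.minimalPeriod (⇑σ) f = d := by
  by_contra hc
  push_neg at hc
  haveI : IsEmpty {f : F // Function.minimalPeriod (⇑σ) f = d} := ⟨fun f => hc f.1 f.2⟩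
  exact h (Nat.card_of_isEmpty)

theorem dvd_sizeCount (σ : Perm F) (d : ℕ) (hd : 0 < d) : d ∣ sizeCount σ d := by
  classical
  have hiff : ∀ x, Function.minimalPeriod (⇑σ) x = d ↔ Function.minimalPeriod (⇑σ) (σ x) = d := by
    intro x; rw [mp_apply_self]
  have := card_dvd_of_allPeriods (σ.subtypePerm (p := fun x => Function.minimalPeriod (⇑σ) x = d) (fun x => (hiff x).symm)) d hd (fun f => by
    rw [mp_subtypePerm]; exact f.2)
  rwa [sizeCount, Nat.card_eq_fintype_card]

theorem sum_sizeCount (σ : Perm F) :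
    ∑ d ∈ Finset.range (Fintype.card F + 1), sizeCount σ d = Fintype.card F := by
  classical
  have h1 : (Finset.univ : Finset F).card
      = ∑ d ∈ Finset.range (Fintype.card F + 1),
          ((Finset.univ : Finset F).filter (fun f => Function.minimalPeriod (⇑σ) f = d)).card := by
    apply Finset.card_eq_sum_card_fiberwise
    intro f _
    rw [Finset.mem_coe, Finset.mem_range]
    exact Nat.lt_succ_of_le (mp_le_card σ f)
  rw [Finset.card_univ] at h1
  conv_rhs => rw [h1]
  apply Finset.sum_congr rfl
  intro d _
  rw [sizeCount, Nat.card_eq_fintype_card, Fintype.card_subtype]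

theorem sizeCount_zero (σ : Perm F) : sizeCount σ 0 = 0 := by
  by_contra h
  obtain ⟨f, hf⟩ := exists_of_sizeCount_ne h
  exact (mp_pos σ f).ne' hf

noncomputable def extT (σ : Perm F) : ℕ →₀ ℕ :=
  Finsupp.onFinset (Finset.range (Fintype.card F + 1)) (fun d => sizeCount σ d / d)
    (fun d hne => by
      rw [Finset.mem_range]
      have hsz : sizeCount σ d ≠ 0 := by
        intro h0
        rw [h0] at hne
        exact hne (Nat.zero_div d)
      obtain ⟨f, hf⟩ := exists_of_sizeCount_ne hsz
      exact Nat.lt_succ_of_le (hf ▸ mp_le_card σ f))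

theorem extT_apply (σ : Perm F) (d : ℕ) : extT σ d = sizeCount σ d / d := rfl

theorem sizeCount_eq_extT (σ : Perm F) (d : ℕ) : sizeCount σ d = d * extT σ d := by
  rcases Nat.eq_zero_or_pos d with hd | hd
  · subst hd; rw [sizeCount_zero]; ring
  · rw [extT_apply, Nat.mul_div_cancel' (dvd_sizeCount σ d hd)]

theorem extT_sum (σ : Perm F) : (extT σ).sum (fun d td => d * td) = Fintype.card F := by
  rw [Finsupp.sum]
  have hsub : (extT σ).support ⊆ Finset.range (Fintype.card F + 1) :=
    Finsupp.support_onFinset_subset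
  rw [Finset.sum_subset hsub (fun d _ hd => by
    rw [Finsupp.notMem_support_iff.mp hd]; ring)]
  calc ∑ d ∈ Finset.range (Fintype.card F + 1), d * extT σ d
      = ∑ d ∈ Finset.range (Fintype.card F + 1), sizeCount σ d := by
        apply Finset.sum_congr rfl
        intro d _
        rw [sizeCount_eq_extT]
    _ = Fintype.card F := sum_sizeCount σ

end Count

end ImAux
namespace ImAux

-- ## generic fiber equivs
theorem sigma_mk_inj {I : Type*} {A : I → Type*} {i : I} {a a' : A i}
    (h : (⟨i, a⟩ : Σ j, A j) = ⟨i, a'⟩) : a = a' :=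
  eq_of_heq (Sigma.mk.inj_iff.mp h).2

noncomputable def sigmaFiberCompEquiv {I : Type*} {A B : I → Type*} (g : ∀ i, A i → B i)
    (i : I) (bb : B i) :
    {a : A i // g i a = bb} ≃ {p : (Σ j, A j) // (⟨p.1, g p.1 p.2⟩ : Σ j, B j) = ⟨i, bb⟩} := by
  refine Equiv.ofBijective (fun a => ⟨⟨i, a.1⟩, by rw [a.2]⟩) ⟨?_, ?_⟩
  · rintro ⟨a, ha⟩ ⟨a', ha'⟩ h
    have h1 : (⟨i, a⟩ : Σ j, A j) = ⟨i, a'⟩ := congrArg (fun x => x.val) h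
    exact Subtype.ext (sigma_mk_inj h1)
  · rintro ⟨⟨i', a⟩, h⟩
    have h2 : (⟨i', g i' a⟩ : Σ j, B j) = ⟨i, bb⟩ := h
    obtain ⟨hi, hha⟩ := Sigma.mk.inj_iff.mp h2
    subst hi
    exact ⟨⟨a, eq_of_heq hha⟩, rfl⟩

noncomputable def prodFiberEquiv {J Z V X : Type*} (c : Z → X) (j : J) (x : X) :
    ({z : Z // c z = x} × V) ≃ {w : J × (Z × V) // (w.1, c w.2.1) = (j, x)} := by
  refine Equiv.ofBijective (fun zv => ⟨(j, (zv.1.val, zv.2)), by rw [zv.1.2]⟩) ⟨?_, ?_⟩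
  · rintro ⟨⟨z, hz⟩, v⟩ ⟨⟨z', hz'⟩, v'⟩ h
    have h1 : ((j, (z, v)) : J × (Z × V)) = (j, (z', v')) := congrArg (fun w => w.val) h
    obtain ⟨-, h2⟩ := Prod.mk_inj.mp h1
    obtain ⟨h3, h4⟩ := Prod.mk_inj.mp h2
    subst h3; subst h4; rfl
  · rintro ⟨⟨j', z, v⟩, h⟩
    obtain ⟨h1, h2⟩ := Prod.mk_inj.mp h
    subst h1
    exact ⟨⟨⟨z, h2⟩, v⟩, rfl⟩

-- ## the model

def kk (q m d : ℕ) : ℕ := d * q / m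
def cc (b d : ℕ) : ℕ := b / d

theorem kk_def (q m d : ℕ) : kk q m d = d * q / m := rfl
theorem cc_def (b d : ℕ) : cc b d = b / d := rfl

abbrev Mt (b q m : ℕ) (t : ℕ →₀ ℕ) : Type :=
  Σ d : t.support, Fin (t d.val) × (ZMod b × Fin (kk q m d.val))
abbrev Bt (t : ℕ →₀ ℕ) : Type := Σ d : t.support, Fin (t d.val) × ZMod d.val

def gt (b q m : ℕ) (t : ℕ →₀ ℕ) (d : t.support) :
    Fin (t d.val) × (ZMod b × Fin (kk q m d.val)) → Fin (t d.val) × ZMod d.val :=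
  fun w => (w.1, ((w.2.1.val : ℕ) : ZMod d.val))

def pit (b q m : ℕ) (t : ℕ →₀ ℕ) : Mt b q m t → Bt t :=
  fun p => ⟨p.1, gt b q m t p.1 p.2⟩

def yt (b q m : ℕ) (t : ℕ →₀ ℕ) : Equiv.Perm (Mt b q m t) :=
  Equiv.sigmaCongrRight (fun _ => Equiv.prodCongr (Equiv.refl _)
    (Equiv.prodCongr (Equiv.addRight 1) (Equiv.refl _)))

def taut (t : ℕ →₀ ℕ) : Equiv.Perm (Bt t) :=
  Equiv.sigmaCongrRight (fun _ => Equiv.prodCongr (Equiv.refl _) (Equiv.addRight 1))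

theorem bt_mk_inj {t : ℕ →₀ ℕ} {d : t.support} {a a' : Fin (t d.val) × ZMod d.val}
    (h : (⟨d, a⟩ : Bt t) = ⟨d, a'⟩) : a = a' :=
  sigma_mk_inj (A := fun dd : t.support => Fin (t dd.val) × ZMod dd.val) h

theorem mt_mk_inj {b q m : ℕ} {t : ℕ →₀ ℕ} {d : t.support}
    {a a' : Fin (t d.val) × (ZMod b × Fin (kk q m d.val))}
    (h : (⟨d, a⟩ : Mt b q m t) = ⟨d, a'⟩) : a = a' :=
  sigma_mk_inj (A := fun dd : t.support => Fin (t dd.val) × (ZMod b × Fin (kk q m dd.val))) h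

section ModelLemmas
variable {b q m s : ℕ} {t : ℕ →₀ ℕ}

theorem support_nezero (hsupp : ∀ d ∈ t.support, 0 < d) : ∀ d : t.support, NeZero (d.val : ℕ) :=
  fun d => ⟨(hsupp d.1 d.2).ne'⟩

theorem yt_apply (d : t.support) (j : Fin (t d.val)) (z : ZMod b) (v : Fin (kk q m d.val)) :
    yt b q m t ⟨d, (j, (z, v))⟩ = ⟨d, (j, (z + 1, v))⟩ := rfl

theorem taut_apply (d : t.support) (j : Fin (t d.val)) (x : ZMod d.val) :
    taut t ⟨d, (j, x)⟩ = ⟨d, (j, x + 1)⟩ := rfl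

theorem mp_yt [NeZero b] (p : Mt b q m t) :
    Function.minimalPeriod (⇑(yt b q m t)) p = b := by
  obtain ⟨d, j, z, v⟩ := p
  have hinj : Function.Injective (fun w : ZMod b => (⟨d, (j, (w, v))⟩ : Mt b q m t)) := by
    intro w w' h
    exact congrArg (fun p : Mt b q m t => p.2.2.1) h
  have := minimalPeriod_transport (y := (· + (1 : ZMod b))) (y' := ⇑(yt b q m t))
    hinj (fun w => rfl) z
  rw [this, minimalPeriod_addRight]

theorem mp_taut (hsupp : ∀ d ∈ t.support, 0 < d) (p : Bt t) :
    Function.minimalPeriod (⇑(taut t)) p = p.1.val := by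
  haveI := support_nezero hsupp
  obtain ⟨d, j, x⟩ := p
  have hinj : Function.Injective (fun w : ZMod d.val => (⟨d, (j, w)⟩ : Bt t)) := by
    intro w w' h
    have h0 : (⟨d, (j, w)⟩ : Bt t) = ⟨d, (j, w')⟩ := h
    exact (Prod.mk_inj.mp (bt_mk_inj h0)).2
  have := minimalPeriod_transport (y := (· + (1 : ZMod d.val))) (y' := ⇑(taut t))
    hinj (fun w => rfl) x
  rw [this, minimalPeriod_addRight]

theorem yt_iterate [NeZero b] (l : ℕ) (d : t.support) (j : Fin (t d.val)) (z : ZMod b)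
    (v : Fin (kk q m d.val)) :
    (⇑(yt b q m t))^[l] ⟨d, (j, (z, v))⟩ = ⟨d, (j, (z + (l : ZMod b), v))⟩ := by
  induction l with
  | zero => simp
  | succ w ih =>
    rw [Function.iterate_succ_apply', ih, yt_apply]
    push_cast
    rw [add_assoc]

theorem pit_yt [NeZero b] (hdvd : ∀ d ∈ t.support, d ∣ b) (p : Mt b q m t) :
    pit b q m t (yt b q m t p) = taut t (pit b q m t p) := by
  obtain ⟨d, j, z, v⟩ := p
  have hdb : (d.val : ℕ) ∣ b := hdvd d.1 d.2
  show (⟨d, (j, (((z+1).val : ℕ) : ZMod d.val))⟩ : Bt t)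
      = ⟨d, (j, ((z.val : ℕ) : ZMod d.val) + 1)⟩
  have : (((z+1).val : ℕ) : ZMod d.val) = ((z.val : ℕ) : ZMod d.val) + 1 := by
    rw [castval_add hdb, castval_one hdb]
  rw [this]

theorem sizeCount_taut (hsupp : ∀ d ∈ t.support, 0 < d) (d : ℕ) :
    sizeCount (taut t) d = d * t d := by
  classical
  haveI := support_nezero hsupp
  by_cases hd : d ∈ t.support
  · haveI : NeZero d := ⟨(hsupp d hd).ne'⟩
    have heq : {p : Bt t // Function.minimalPeriod (⇑(taut t)) p = d}
        ≃ (Fin (t d) × ZMod d) := by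
      refine Equiv.symm (Equiv.ofBijective
        (fun w => ⟨⟨⟨d, hd⟩, (w.1, w.2)⟩, mp_taut hsupp _⟩) ⟨?_, ?_⟩)
      · rintro ⟨j, x⟩ ⟨j', x'⟩ h
        have h1 : (⟨⟨d, hd⟩, (j, x)⟩ : Bt t) = ⟨⟨d, hd⟩, (j', x')⟩ :=
          congrArg (fun w => w.val) h
        have h2 := bt_mk_inj h1
        obtain ⟨h3, h4⟩ := Prod.mk_inj.mp h2
        exact Prod.ext h3 h4
      · rintro ⟨⟨⟨d', hd'⟩, ⟨j, x⟩⟩, hmp⟩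
        rw [mp_taut hsupp] at hmp
        subst hmp
        exact ⟨(j, x), Subtype.ext rfl⟩
    rw [sizeCount, Nat.card_congr heq, Nat.card_eq_fintype_card,
      Fintype.card_prod, Fintype.card_fin, ZMod.card]
    ring
  · have ht : t d = 0 := Finsupp.notMem_support_iff.mp hd
    haveI : IsEmpty {p : Bt t // Function.minimalPeriod (⇑(taut t)) p = d} := by
      constructor
      rintro ⟨p, hp⟩
      rw [mp_taut hsupp] at hp
      exact hd (hp ▸ p.1.2)
    rw [sizeCount, Nat.card_of_isEmpty, ht]
    ring

-- arithmetic helpers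
theorem bkk_eq (hm : 0 < m) (hn : m * s = b * q) {d : ℕ} (hmd : m ∣ d * q) :
    b * kk q m d = d * s := by
  apply Nat.eq_of_mul_eq_mul_left hm
  rw [kk_def]
  calc m * (b * (d * q / m)) = b * (m * (d * q / m)) := by ring
    _ = b * (d * q) := by rw [Nat.mul_div_cancel' hmd]
    _ = d * (b * q) := by ring
    _ = d * (m * s) := by rw [hn]
    _ = m * (d * s) := by ring

theorem scc_eq (hm : 0 < m) (hn : m * s = b * q) {d : ℕ} (hdb : d ∣ b) (hmd : m ∣ d * q) :
    cc b d * kk q m d = s := by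
  apply Nat.eq_of_mul_eq_mul_left hm
  rw [kk_def, cc_def]
  calc m * (b / d * (d * q / m)) = b / d * (m * (d * q / m)) := by ring
    _ = b / d * (d * q) := by rw [Nat.mul_div_cancel' hmd]
    _ = (b / d * d) * q := by ring
    _ = b * q := by rw [Nat.div_mul_cancel hdb]
    _ = m * s := hn.symm

theorem kk_pos (hq : 0 < q) (hm : 0 < m) {d : ℕ} (hd : 0 < d) (hmd : m ∣ d * q) :
    0 < kk q m d := by
  rw [kk_def]
  exact Nat.div_pos (Nat.le_of_dvd (Nat.mul_pos hd hq) hmd) hm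

theorem cc_pos (hb : 0 < b) {d : ℕ} (hd : 0 < d) (hdb : d ∣ b) : 0 < cc b d := by
  rw [cc_def]
  exact Nat.div_pos (Nat.le_of_dvd hb hdb) hd

theorem dcc_eq {d : ℕ} (hdb : d ∣ b) : d * cc b d = b := by
  rw [cc_def]
  exact Nat.mul_div_cancel' hdb

theorem card_Bt (hsupp : ∀ d ∈ t.support, 0 < d)
    (hsum : t.sum (fun d td => d * td) = m) : Nat.card (Bt t) = m := by
  classical
  haveI := support_nezero hsupp
  rw [Nat.card_eq_fintype_card, Fintype.card_sigma]
  have h1 : ∀ d : t.support, Fintype.card (Fin (t d.val) × ZMod d.val) = d.val * t d.val := by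
    intro d
    rw [Fintype.card_prod, Fintype.card_fin, ZMod.card]
    ring
  rw [Finset.sum_congr rfl (fun d _ => h1 d)]
  rw [Finset.univ_eq_attach, Finset.sum_attach t.support (fun d => d * t d)]
  exact hsum

theorem card_Mt [NeZero b] (hq : 0 < q) (hm : 0 < m) (hn : m * s = b * q)
    (hsupp : ∀ d ∈ t.support, 0 < d ∧ d ∣ b ∧ m ∣ d * q)
    (hsum : t.sum (fun d td => d * td) = m) : Nat.card (Mt b q m t) = m * s := by
  classical
  haveI := support_nezero (fun d hd => (hsupp d hd).1)
  rw [Nat.card_eq_fintype_card, Fintype.card_sigma]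
  have h1 : ∀ d : t.support,
      Fintype.card (Fin (t d.val) × (ZMod b × Fin (kk q m d.val)))
        = (d.val * t d.val) * s := by
    intro d
    rw [Fintype.card_prod, Fintype.card_fin, Fintype.card_prod, ZMod.card, Fintype.card_fin]
    rw [show t d.val * (b * kk q m d.val) = t d.val * (b * kk q m d.val) from rfl,
      bkk_eq hm hn (hsupp d.1 d.2).2.2]
    ring
  rw [Finset.sum_congr rfl (fun d _ => h1 d)]
  rw [Finset.univ_eq_attach, Finset.sum_attach t.support (fun d => (d * t d) * s)]
  rw [← Finset.sum_mul]
  rw [show (∑ d ∈ t.support, d * t d) = t.sum (fun d td => d * td) from rfl, hsum]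

theorem card_fib_pit [NeZero b] (hb : 0 < b) (hq : 0 < q) (hm : 0 < m) (hn : m * s = b * q)
    (hsupp : ∀ d ∈ t.support, 0 < d ∧ d ∣ b ∧ m ∣ d * q) (i : Bt t) :
    Nat.card {p : Mt b q m t // pit b q m t p = i} = s := by
  classical
  haveI := support_nezero (fun d hd => (hsupp d hd).1)
  rw [Nat.card_eq_fintype_card]
  obtain ⟨d, j, x⟩ := i
  obtain ⟨hd0, hdb, hmd⟩ := hsupp d.1 d.2
  haveI : NeZero (d.val : ℕ) := ⟨hd0.ne'⟩
  have e1 := (sigmaFiberCompEquiv (gt b q m t) d (j, x)).symm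
  have e2 := prodFiberEquiv (fun z : ZMod b => ((z.val : ℕ) : ZMod d.val)) j
    (x := x) (V := Fin (kk q m d.val))
  have hcongr := Fintype.card_congr (e1.trans e2.symm)
  rw [show Fintype.card {p : Mt b q m t // pit b q m t p = ⟨d, (j, x)⟩}
      = Fintype.card {p : Mt b q m t //
        (⟨p.1, gt b q m t p.1 p.2⟩ : Bt t) = ⟨d, (j, x)⟩} from rfl]
  rw [hcongr, Fintype.card_prod, Fintype.card_fin, card_valCast_fiber hdb hd0 x]
  exact scc_eq hm hn hdb hmd

end ModelLemmas

section Main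
variable {E F : Type*} [Fintype E] [Fintype F] [DecidableEq E] [DecidableEq F]
  {π : E → F} {b q m s : ℕ} {t : ℕ →₀ ℕ}

theorem card_E (hcardF : Fintype.card F = m)
    (hfib : ∀ i : F, Fintype.card {e // π e = i} = s) : Fintype.card E = m * s := by
  classical
  rw [← Fintype.card_congr (Equiv.sigmaFiberEquiv π), Fintype.card_sigma]
  rw [Finset.sum_congr rfl (fun i _ => hfib i), Finset.sum_const, Finset.card_univ, hcardF]
  rw [smul_eq_mul]

theorem pi_surjective (hs : 0 < s) (hfib : ∀ i : F, Fintype.card {e // π e = i} = s) :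
    Function.Surjective π := by
  intro i
  have : 0 < Fintype.card {e // π e = i} := by rw [hfib]; exact hs
  obtain ⟨⟨e, he⟩⟩ := Fintype.card_pos_iff.mp this
  exact ⟨e, he⟩

theorem MST [NeZero b] (hb : 0 < b) (hq : 0 < q) (hm : 0 < m) (hs : 0 < s)
    (hcardF : Fintype.card F = m) (hfib : ∀ i : F, Fintype.card {e // π e = i} = s)
    (hn : m * s = b * q)
    (hsum : t.sum (fun d td => d * td) = m)
    (hsupp : ∀ d ∈ t.support, 0 < d ∧ d ∣ b ∧ m ∣ d * q)
    (y : Equiv.Perm E) (hall : ∀ e, Function.minimalPeriod (⇑y) e = b)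
    (τ : Equiv.Perm F) (hτ : ∀ e, π (y e) = τ (π e))
    (hext : ∀ d : ℕ, sizeCount τ d = d * t d) :
    ∃ (Ψ : Mt b q m t ≃ E) (β : Bt t ≃ F),
      (∀ p, Ψ (yt b q m t p) = y (Ψ p)) ∧ (∀ p, π (Ψ p) = β (pit b q m t p)) := by
  classical
  haveI := support_nezero (fun d hd => (hsupp d hd).1)
  have hτsemi : Function.Semiconj π ⇑y ⇑τ := fun e => hτ e
  have hsemi : ∀ (l : ℕ) (e : E), π ((⇑y)^[l] e) = (⇑τ)^[l] (π e) :=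
    fun l e => (hτsemi.iterate_right l) e
  -- canonical structure on each size class of τ
  have hiff : ∀ (d : t.support) (x : F),
      Function.minimalPeriod (⇑τ) x = d.val ↔ Function.minimalPeriod (⇑τ) (τ x) = d.val := by
    intro d x; rw [mp_apply_self]
  have hrho : ∀ d : t.support, ∃ ρ : (ZMod d.val × Fin (t d.val)) ≃
      {f : F // Function.minimalPeriod (⇑τ) f = d.val},
      ∀ u v, (τ.subtypePerm (fun x => (hiff d x).symm)) (ρ (u, v)) = ρ (u + 1, v) := by
    intro d
    apply exists_canonical _ _ _ (hsupp d.1 d.2).1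
    · intro f
      rw [mp_subtypePerm]
      exact f.2
    · have h1 := hext d.val
      rw [sizeCount, Nat.card_eq_fintype_card] at h1
      rw [h1]
  choose ρ hρ using hrho
  set fF : ∀ d : t.support, ZMod d.val × Fin (t d.val) → F := fun d w => (ρ d w).val with hfF
  have hfF_mp : ∀ d w, Function.minimalPeriod (⇑τ) (fF d w) = d.val := fun d w => (ρ d w).2
  have hfF_τ : ∀ d x j, τ (fF d (x, j)) = fF d (x + 1, j) := by
    intro d x j
    exact congrArg Subtype.val (hρ d x j)
  have hfF_iter : ∀ d (l : ℕ) x j, (⇑τ)^[l] (fF d (x, j)) = fF d (x + l, j) := by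
    intro d l
    induction l with
    | zero => intro x j; simp
    | succ w ih =>
      intro x j
      rw [Function.iterate_succ_apply', ih, hfF_τ]
      push_cast
      rw [add_assoc]
  have hfF_inj : ∀ d, Function.Injective (fF d) :=
    fun d => Subtype.val_injective.comp (ρ d).injective
  -- the base equivalence β
  have hβbij : Function.Bijective (fun p : Bt t => fF p.1 (p.2.2, p.2.1)) := by
    constructor
    · rintro ⟨d, j, x⟩ ⟨d', j', x'⟩ h
      simp only at h
      have hd : d = d' := by
        apply Subtype.ext
        rw [← hfF_mp d (x, j), ← hfF_mp d' (x', j'), h]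
      subst hd
      obtain ⟨h1, h2⟩ := Prod.mk_inj.mp (hfF_inj d h)
      rw [h1, h2]
    · intro f
      have hne : sizeCount τ (Function.minimalPeriod (⇑τ) f) ≠ 0 := by
        rw [sizeCount]
        have : Nonempty {g : F // Function.minimalPeriod (⇑τ) g
            = Function.minimalPeriod (⇑τ) f} := ⟨⟨f, rfl⟩⟩
        exact Nat.card_pos.ne'
      rw [hext] at hne
      have htne : t (Function.minimalPeriod (⇑τ) f) ≠ 0 := by
        intro h0; rw [h0, Nat.mul_zero] at hne; exact hne rfl
      have hdm : Function.minimalPeriod (⇑τ) f ∈ t.support := Finsupp.mem_support_iff.mpr htne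
      obtain ⟨⟨x, j⟩, hxj⟩ := (ρ ⟨_, hdm⟩).surjective ⟨f, rfl⟩
      exact ⟨⟨⟨_, hdm⟩, (j, x)⟩, congrArg Subtype.val hxj⟩
  set β : Bt t ≃ F := Equiv.ofBijective _ hβbij with hβ
  -- base points and return maps
  set f0 : ∀ (d : t.support), Fin (t d.val) → F := fun d j => fF d (0, j) with hf0
  have hf0fix : ∀ d j, (⇑τ)^[d.val] (f0 d j) = f0 d j := by
    intro d j
    rw [hf0]
    simp only
    rw [hfF_iter]
    rw [ZMod.natCast_self, add_zero]
  have hSiff : ∀ (d : t.support) (j : Fin (t d.val)) (e : E),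
      π e = f0 d j ↔ π ((y ^ (d.val : ℕ)) e) = f0 d j := by
    intro d j e
    rw [Equiv.Perm.coe_pow, hsemi]
    constructor
    · intro he; rw [he, hf0fix]
    · intro he
      apply Function.Injective.iterate τ.injective d.val
      rw [he, hf0fix]
  have hSiff' : ∀ (d : t.support) (j : Fin (t d.val)) (e : E),
      π e = f0 d j ↔ π ((y ^ (d.val : ℕ)) e) = f0 d j := hSiff
  let g : ∀ (d : t.support) (j : Fin (t d.val)), Equiv.Perm {e : E // π e = f0 d j} :=
    fun d j => (y ^ (d.val : ℕ)).subtypePerm (fun e => (hSiff d j e).symm)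
  have hgval : ∀ (d : t.support) (j : Fin (t d.val)) (es : {e : E // π e = f0 d j}),
      ((g d j) es).val = (⇑y)^[d.val] es.val := by
    intro d j es
    show ((y ^ (d.val : ℕ)) es.val) = (⇑y)^[d.val] es.val
    rw [Equiv.Perm.coe_pow]
  have hgmp : ∀ (d : t.support) (j : Fin (t d.val)) (es : {e : E // π e = f0 d j}),
      Function.minimalPeriod (⇑(g d j)) es = cc b d.val := by
    intro d j es
    have h1 : Function.minimalPeriod (⇑(g d j)) es
        = Function.minimalPeriod (⇑(y ^ (d.val : ℕ))) es.val := mp_subtypePerm _ _ _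
    rw [h1, Equiv.Perm.coe_pow,
      Function.minimalPeriod_iterate_eq_div_gcd (hsupp d.1 d.2).1.ne',
      hall, Nat.gcd_eq_right (hsupp d.1 d.2).2.1, cc_def]
  have hrho' : ∀ (d : t.support) (j : Fin (t d.val)),
      ∃ ρ' : (ZMod (cc b d.val) × Fin (kk q m d.val)) ≃ {e : E // π e = f0 d j},
      ∀ u v, (g d j) (ρ' (u, v)) = ρ' (u + 1, v) := by
    intro d j
    apply exists_canonical _ _ _ (cc_pos hb (hsupp d.1 d.2).1 (hsupp d.1 d.2).2.1)
      (hgmp d j)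
    rw [hfib, scc_eq hm hn (hsupp d.1 d.2).2.1 (hsupp d.1 d.2).2.2]
  choose ρ' hρ' using hrho'
  have hgiter : ∀ (d : t.support) (j : Fin (t d.val)) (w : ℕ) u v,
      (⇑(g d j))^[w] (ρ' d j (u, v)) = ρ' d j (u + w, v) := by
    intro d j w
    induction w with
    | zero => intro u v; simp
    | succ w' ih =>
      intro u v
      rw [Function.iterate_succ_apply', ih, hρ']
      push_cast
      rw [add_assoc]
  have hyiter : ∀ (d : t.support) (j : Fin (t d.val)) (w : ℕ) (es : {e : E // π e = f0 d j}),
      (⇑y)^[d.val * w] es.val = ((⇑(g d j))^[w] es).val := by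
    intro d j w
    induction w with
    | zero => intro es; simp
    | succ w' ih =>
      intro es
      rw [show d.val * (w' + 1) = d.val * w' + d.val by ring,
        Function.iterate_add_apply, ← hgval, ih, ← Function.iterate_succ_apply]
  let Ψf : Mt b q m t → E :=
    fun p => (⇑y)^[p.2.2.1.val] ((ρ' p.1 p.2.1 (0, p.2.2.2)).val)
  have hπΨ : ∀ (d : t.support) j (z : ZMod b) v,
      π (Ψf ⟨d, (j, (z, v))⟩) = fF d (((z.val : ℕ) : ZMod d.val), j) := by
    intro d j z v
    show π ((⇑y)^[z.val] ((ρ' d j (0, v)).val)) = _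
    rw [hsemi, (ρ' d j (0, v)).2, hf0]
    simp only
    rw [hfF_iter, zero_add]
  have haux : ∀ (d : t.support) (j : Fin (t d.val)) (z z' : ZMod b) v v',
      z'.val ≤ z.val →
      ((z.val : ℕ) : ZMod d.val) = ((z'.val : ℕ) : ZMod d.val) →
      (⇑y)^[z.val] ((ρ' d j (0, v)).val) = (⇑y)^[z'.val] ((ρ' d j (0, v')).val) →
      z = z' ∧ v = v' := by
    intro d j z z' v v' hle hres heq
    have hll : z'.val + (z.val - z'.val) = z.val := by omega
    have heq2 : (⇑y)^[z.val - z'.val] ((ρ' d j (0, v)).val) = (ρ' d j (0, v')).val := by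
      apply (y.injective.iterate z'.val)
      rw [← Function.iterate_add_apply, Nat.add_sub_cancel' hle, heq]
    have hdl : d.val ∣ z.val - z'.val := by
      have hmod : z.val ≡ z'.val [MOD d.val] := (ZMod.natCast_eq_natCast_iff _ _ _).mp hres
      exact (Nat.modEq_iff_dvd' hle).mp hmod.symm
    obtain ⟨w, hw⟩ := hdl
    rw [hw, hyiter d j w (ρ' d j (0, v)), hgiter] at heq2
    have h5 : ((0 + (w : ZMod (cc b d.val)), v) : ZMod (cc b d.val) × Fin (kk q m d.val))
        = (0, v') := (ρ' d j).injective (Subtype.val_injective heq2)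
    obtain ⟨h6, h7⟩ := Prod.mk_inj.mp h5
    rw [zero_add] at h6
    have hcw : cc b d.val ∣ w := (ZMod.natCast_eq_zero_iff _ _).mp h6
    have hbl : b ∣ z.val - z'.val := by
      obtain ⟨w2, hw2⟩ := hcw
      exact ⟨w2, by rw [hw, hw2, ← mul_assoc, dcc_eq (hsupp d.1 d.2).2.1]⟩
    have hlz : z.val - z'.val = 0 := by
      rcases Nat.eq_zero_or_pos (z.val - z'.val) with h | h
      · exact h
      · have h8 := Nat.le_of_dvd h hbl
        have h9 : z.val < b := ZMod.val_lt z
        omega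
    have hzz : z = z' := by
      have hvv : z.val = z'.val := by omega
      rw [← ZMod.natCast_rightInverse z, ← ZMod.natCast_rightInverse z', hvv]
    exact ⟨hzz, h7⟩
  have hinj : Function.Injective Ψf := by
    rintro ⟨d, j, z, v⟩ ⟨d', j', z', v'⟩ h
    have hπ2 : fF d (((z.val : ℕ) : ZMod d.val), j) = fF d' (((z'.val : ℕ) : ZMod d'.val), j') := by
      rw [← hπΨ, ← hπΨ]
      exact congrArg π h
    have hd : d = d' := by
      apply Subtype.ext
      rw [← hfF_mp d (((z.val : ℕ) : ZMod d.val), j),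
        ← hfF_mp d' (((z'.val : ℕ) : ZMod d'.val), j'), hπ2]
    subst hd
    obtain ⟨hres, hj⟩ := Prod.mk_inj.mp (hfF_inj d hπ2)
    subst hj
    have h' : (⇑y)^[z.val] ((ρ' d j (0, v)).val) = (⇑y)^[z'.val] ((ρ' d j (0, v')).val) := h
    rcases le_total z'.val z.val with hle | hle
    · obtain ⟨hz, hv⟩ := haux d j z z' v v' hle hres h'
      subst hz; subst hv; rfl
    · obtain ⟨hz, hv⟩ := haux d j z' z v' v hle hres.symm h'.symm
      subst hz; subst hv; rfl
  have hcards : Fintype.card (Mt b q m t) = Fintype.card E := by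
    have h1 := card_Mt (t := t) (b := b) hq hm hn hsupp hsum
    rw [Nat.card_eq_fintype_card] at h1
    rw [h1, card_E hcardF hfib]
  have hbijΨ : Function.Bijective Ψf :=
    (Fintype.bijective_iff_injective_and_card Ψf).mpr ⟨hinj, hcards⟩
  refine ⟨Equiv.ofBijective Ψf hbijΨ, β, ?_, ?_⟩
  · rintro ⟨d, j, z, v⟩
    show Ψf ⟨d, (j, (z + 1, v))⟩ = y (Ψf ⟨d, (j, (z, v))⟩)
    show (⇑y)^[(z+1).val] ((ρ' d j (0, v)).val) = y ((⇑y)^[z.val] ((ρ' d j (0, v)).val))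
    have hv1 : (z + 1).val = (z.val + 1) % b := by
      rw [← ZMod.val_natCast]
      congr 1
      push_cast
      rw [ZMod.natCast_rightInverse z]
    rw [hv1]
    have h6 := Function.iterate_mod_minimalPeriod_eq (f := ⇑y)
      (x := (ρ' d j (0, v)).val) (n := z.val + 1)
    rw [hall] at h6
    rw [h6, Function.iterate_succ_apply']
  · rintro ⟨d, j, z, v⟩
    show π (Ψf ⟨d, (j, (z, v))⟩) = β (pit b q m t ⟨d, (j, (z, v))⟩)
    rw [hπΨ]
    rfl

theorem exists_model_member [NeZero b] (hb : 0 < b) (hq : 0 < q) (hm : 0 < m) (hs : 0 < s)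
    (hcardF : Fintype.card F = m) (hfib : ∀ i : F, Fintype.card {e // π e = i} = s)
    (hn : m * s = b * q)
    (hsum : t.sum (fun d td => d * td) = m)
    (hsupp : ∀ d ∈ t.support, 0 < d ∧ d ∣ b ∧ m ∣ d * q) :
    ∃ (y : Equiv.Perm E) (τ : Equiv.Perm F),
      (∀ e, Function.minimalPeriod (⇑y) e = b) ∧ (∀ e, π (y e) = τ (π e)) ∧
      (∀ d : ℕ, sizeCount τ d = d * t d) := by
  classical
  haveI := support_nezero (fun d hd => (hsupp d hd).1)
  have hcBt : Fintype.card (Bt t) = Fintype.card F := by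
    have h1 := card_Bt (fun d hd => (hsupp d hd).1) hsum
    rw [Nat.card_eq_fintype_card] at h1
    rw [h1, hcardF]
  let β0 : Bt t ≃ F := Fintype.equivOfCardEq hcBt
  have hfibs : ∀ i : Bt t, Fintype.card {p : Mt b q m t // pit b q m t p = i}
      = Fintype.card {e : E // π e = β0 i} := by
    intro i
    have h1 := card_fib_pit (t := t) hb hq hm hn hsupp i
    rw [Nat.card_eq_fintype_card] at h1
    rw [h1, hfib]
  let θ : ∀ i : Bt t, {p : Mt b q m t // pit b q m t p = i} ≃ {e : E // π e = β0 i} :=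
    fun i => Fintype.equivOfCardEq (hfibs i)
  let Ψ0 : Mt b q m t ≃ E := glueEquiv (pit b q m t) π β0 θ
  have hΨ0π : ∀ p, π (Ψ0 p) = β0 (pit b q m t p) := glueEquiv_pi (pit b q m t) π β0 θ
  let y : Equiv.Perm E := Ψ0.permCongr (yt b q m t)
  have hy : ∀ p, Ψ0 (yt b q m t p) = y (Ψ0 p) := by
    intro p
    simp [y, Equiv.permCongr_apply]
  have hall : ∀ e, Function.minimalPeriod (⇑y) e = b := by
    intro e
    have h2 := minimalPeriod_transport Ψ0.injective hy (Ψ0.symm e)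
    rw [Equiv.apply_symm_apply] at h2
    rw [h2, mp_yt]
  let τ : Equiv.Perm F := β0.permCongr (taut t)
  have hτβ : ∀ pB, β0 (taut t pB) = τ (β0 pB) := by
    intro pB
    simp [τ, Equiv.permCongr_apply]
  have hτ : ∀ e, π (y e) = τ (π e) := by
    intro e
    conv_lhs => rw [← Equiv.apply_symm_apply Ψ0 e]
    rw [← hy, hΨ0π, pit_yt (fun d hd => (hsupp d hd).2.1), hτβ, ← hΨ0π,
      Equiv.apply_symm_apply]
  refine ⟨y, τ, hall, hτ, ?_⟩
  intro d
  have hmpτ : ∀ pB : Bt t, Function.minimalPeriod (⇑τ) (β0 pB)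
      = Function.minimalPeriod (⇑(taut t)) pB :=
    fun pB => minimalPeriod_transport β0.injective hτβ pB
  have hcongr : {f : F // Function.minimalPeriod (⇑τ) f = d}
      ≃ {pB : Bt t // Function.minimalPeriod (⇑(taut t)) pB = d} := by
    refine Equiv.symm (Equiv.subtypeEquiv β0 ?_)
    intro pB
    rw [hmpτ]
  rw [sizeCount, Nat.card_congr hcongr, ← sizeCount, sizeCount_taut (fun d hd => (hsupp d hd).1)]

theorem card_model_stab [NeZero b] (hb : 0 < b) (hq : 0 < q) (hm : 0 < m) (hs : 0 < s)
    (hn : m * s = b * q)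
    (hsum : t.sum (fun d td => d * td) = m)
    (hsupp : ∀ d ∈ t.support, 0 < d ∧ d ∣ b ∧ m ∣ d * q) :
    Nat.card {h : Equiv.Perm (Mt b q m t) // BlocksTo (pit b q m t) h ∧
        ∀ p, h (yt b q m t p) = yt b q m t (h p)}
      = ∏ d ∈ t.support, ((t d).factorial *
          (d * ((cc b d) ^ (kk q m d) * (kk q m d).factorial)) ^ (t d)) := by
  classical
  haveI := support_nezero (fun d hd => (hsupp d hd).1)
  have hccpos : ∀ d : t.support, 0 < cc b d.val :=
    fun d => cc_pos hb (hsupp d.1 d.2).1 (hsupp d.1 d.2).2.1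
  have hkkpos : ∀ d : t.support, 0 < kk q m d.val :=
    fun d => kk_pos hq hm (hsupp d.1 d.2).1 (hsupp d.1 d.2).2.2
  haveI : ∀ d : t.support, NeZero (cc b d.val) := fun d => ⟨(hccpos d).ne'⟩
  -- the mixed-radix decomposition of ZMod b
  have hzeta : ∀ d : t.support, ∃ ζ : ZMod b ≃ (ZMod d.val × ZMod (cc b d.val)),
      ∀ z : ZMod b, ζ z = (((z.val : ℕ) : ZMod d.val),
        ((z.val / d.val : ℕ) : ZMod (cc b d.val))) := by
    intro d
    obtain ⟨hd0, hdb, _⟩ := hsupp d.1 d.2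
    have hinj : Function.Injective (fun z : ZMod b =>
        ((((z.val : ℕ) : ZMod d.val), ((z.val / d.val : ℕ) : ZMod (cc b d.val))) :
          ZMod d.val × ZMod (cc b d.val))) := by
      intro z z' h
      obtain ⟨h1, h2⟩ := Prod.mk_inj.mp h
      have h3 : z.val % d.val = z'.val % d.val := by
        rw [← ZMod.val_natCast (n := d.val), ← ZMod.val_natCast (n := d.val), h1]
      have hlt : ∀ w : ZMod b, w.val / d.val < cc b d.val := by
        intro w
        rw [cc_def]
        exact Nat.div_lt_div_of_lt_of_dvd hdb (ZMod.val_lt w)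
      have h4 : z.val / d.val = z'.val / d.val := by
        have := congrArg ZMod.val h2
        rwa [ZMod.val_natCast, ZMod.val_natCast, Nat.mod_eq_of_lt (hlt z),
          Nat.mod_eq_of_lt (hlt z')] at this
      have h5 : z.val = z'.val := by
        calc z.val = d.val * (z.val / d.val) + z.val % d.val := (Nat.div_add_mod _ _).symm
          _ = d.val * (z'.val / d.val) + z'.val % d.val := by rw [h3, h4]
          _ = z'.val := Nat.div_add_mod _ _
      rw [← ZMod.natCast_rightInverse z, ← ZMod.natCast_rightInverse z', h5]
    have hcards : Fintype.card (ZMod b) = Fintype.card (ZMod d.val × ZMod (cc b d.val)) := by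
      rw [ZMod.card, Fintype.card_prod, ZMod.card, ZMod.card, dcc_eq hdb]
    exact ⟨Equiv.ofBijective _ ((Fintype.bijective_iff_injective_and_card _).mpr
      ⟨hinj, hcards⟩), fun z => rfl⟩
  choose zeta hzspec using hzeta
  have hzres : ∀ (d : t.support) (w : ZMod d.val × ZMod (cc b d.val)),
      ((((zeta d).symm w).val : ℕ) : ZMod d.val) = w.1 := by
    intro d w
    have := hzspec d ((zeta d).symm w)
    rw [Equiv.apply_symm_apply] at this
    exact (congrArg Prod.fst this).symm
  -- data
  let K : t.support → Type _ := fun d =>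
    Equiv.Perm (Fin (t d.val)) ×
      (Fin (t d.val) → (ZMod d.val × (Fin (kk q m d.val) → ZMod (cc b d.val)) ×
        Equiv.Perm (Fin (kk q m d.val))))
  let A : ∀ (d : t.support),
      (ZMod d.val × (Fin (kk q m d.val) → ZMod (cc b d.val)) ×
        Equiv.Perm (Fin (kk q m d.val))) → Fin (kk q m d.val) → ZMod b :=
    fun d dat v => (zeta d).symm (dat.1, dat.2.1 v)
  have hAres : ∀ d dat v, (((A d dat v).val : ℕ) : ZMod d.val) = dat.1 :=
    fun d dat v => hzres d _
  let Th : (∀ d, K d) → Equiv.Perm (Mt b q m t) := fun D =>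
    Equiv.sigmaCongrRight (fun d =>
      Equiv.prodShear (D d).1 (fun j =>
        (Equiv.prodComm (ZMod b) (Fin (kk q m d.val))).trans
          ((Equiv.prodShear ((D d).2 j).2.2
            (fun v => Equiv.addLeft (A d ((D d).2 j) v))).trans
          (Equiv.prodComm (Fin (kk q m d.val)) (ZMod b)))))
  have hTh : ∀ D (d : t.support) j (z : ZMod b) v,
      Th D ⟨d, (j, (z, v))⟩
        = ⟨d, ((D d).1 j, (A d ((D d).2 j) v + z, ((D d).2 j).2.2 v))⟩ := by
    intro D d j z v
    rfl
  have hmem : ∀ D, BlocksTo (pit b q m t) (Th D) ∧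
      ∀ p, Th D (yt b q m t p) = yt b q m t (Th D p) := by
    intro D
    constructor
    · rintro ⟨d, j, z, v⟩ ⟨d', j', z', v'⟩ hpp
      have hd : d = d' := (Sigma.mk.inj_iff.mp hpp).1
      subst hd
      obtain ⟨hj, hres⟩ := Prod.mk_inj.mp (bt_mk_inj hpp)
      subst hj
      rw [hTh, hTh]
      show (⟨d, ((D d).1 j, ((((A d ((D d).2 j) v + z).val : ℕ)) : ZMod d.val))⟩ : Bt t)
        = ⟨d, ((D d).1 j, ((((A d ((D d).2 j) v' + z').val : ℕ)) : ZMod d.val))⟩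
      have hdb := (hsupp d.1 d.2).2.1
      have : ((((A d ((D d).2 j) v + z).val : ℕ)) : ZMod d.val)
          = ((((A d ((D d).2 j) v' + z').val : ℕ)) : ZMod d.val) := by
        rw [castval_add hdb, castval_add hdb, hAres, hAres, hres]
      rw [this]
    · rintro ⟨d, j, z, v⟩
      rw [yt_apply, hTh, hTh, yt_apply]
      have : A d ((D d).2 j) v + (z + 1) = A d ((D d).2 j) v + z + 1 := by ring
      rw [this]
  -- injectivity
  have hThinj : Function.Injective (fun D => (⟨Th D, hmem D⟩ :
      {h : Equiv.Perm (Mt b q m t) // BlocksTo (pit b q m t) h ∧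
        ∀ p, h (yt b q m t p) = yt b q m t (h p)})) := by
    intro D D' hDD
    have hfun : ∀ p, Th D p = Th D' p := by
      intro p
      have := congrArg (fun w => w.val) hDD
      exact congrFun (congrArg (fun (w : Equiv.Perm (Mt b q m t)) => (w : Mt b q m t → Mt b q m t)) this) p
    funext d
    have hpt : ∀ j z v, ((((D d).1 j : Fin (t d.val)),
        ((A d ((D d).2 j) v + z : ZMod b), (((D d).2 j).2.2 v : Fin (kk q m d.val)))))
        = (((D' d).1 j), ((A d ((D' d).2 j) v + z), (((D' d).2 j).2.2 v))) := by
      intro j z v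
      have h0 := hfun ⟨d, (j, (z, v))⟩
      rw [hTh, hTh] at h0
      exact mt_mk_inj h0
    apply Prod.ext
    · apply Equiv.ext
      intro j
      exact (Prod.mk_inj.mp (hpt j 0 ⟨0, hkkpos d⟩)).1
    · funext j
      have hA : ∀ v, A d ((D d).2 j) v = A d ((D' d).2 j) v := by
        intro v
        have := (Prod.mk_inj.mp ((Prod.mk_inj.mp (hpt j 0 v)).2)).1
        rwa [add_zero, add_zero] at this
      have hnu : ∀ v, ((D d).2 j).2.2 v = ((D' d).2 j).2.2 v := by
        intro v
        exact (Prod.mk_inj.mp ((Prod.mk_inj.mp (hpt j 0 v)).2)).2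
      have hzz : ∀ v, ((((D d).2 j).1, ((D d).2 j).2.1 v) :
          ZMod d.val × ZMod (cc b d.val)) = (((D' d).2 j).1, ((D' d).2 j).2.1 v) := by
        intro v
        exact (zeta d).symm.injective (hA v)
      refine Prod.ext ?_ (Prod.ext ?_ ?_)
      · exact (Prod.mk_inj.mp (hzz ⟨0, hkkpos d⟩)).1
      · funext v
        exact (Prod.mk_inj.mp (hzz v)).2
      · exact Equiv.ext hnu
  -- surjectivity
  have hThsur : Function.Surjective (fun D => (⟨Th D, hmem D⟩ :
      {h : Equiv.Perm (Mt b q m t) // BlocksTo (pit b q m t) h ∧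
        ∀ p, h (yt b q m t p) = yt b q m t (h p)})) := by
    rintro ⟨h, hbl, hcomm⟩
    have hfibMt : ∀ i : Bt t, Fintype.card {p : Mt b q m t // pit b q m t p = i} = s := by
      intro i
      have h1 := card_fib_pit (t := t) hb hq hm hn hsupp i
      rwa [Nat.card_eq_fintype_card] at h1
    have hsur : Function.Surjective (pit b q m t) := pi_surjective hs hfibMt
    obtain ⟨tb, htb⟩ := exists_tau hsur hbl
    have httb : ∀ pB, tb (taut t pB) = taut t (tb pB) := by
      intro pB
      obtain ⟨p, rfl⟩ := hsur pB
      rw [← pit_yt (fun d hd => (hsupp d hd).2.1), ← htb, hcomm,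
        pit_yt (fun d hd => (hsupp d hd).2.1), htb]
    have hdpres : ∀ pB : Bt t, ((tb pB).1 : t.support) = pB.1 := by
      intro pB
      apply Subtype.ext
      have h1 := minimalPeriod_transport tb.injective httb pB
      rw [mp_taut (fun d hd => (hsupp d hd).1), mp_taut (fun d hd => (hsupp d hd).1)] at h1
      exact h1
    have hline : ∀ (l : ℕ) p, h ((⇑(yt b q m t))^[l] p) = (⇑(yt b q m t))^[l] (h p) :=
      fun l p => (Function.Semiconj.iterate_right (fun p' => hcomm p') l) p
    have hbase : ∀ (d : t.support) (j : Fin (t d.val)) (v : Fin (kk q m d.val)),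
        ∃ (j2 : Fin (t d.val)) (z2 : ZMod b) (v2 : Fin (kk q m d.val)),
          h ⟨d, (j, (0, v))⟩ = ⟨d, (j2, (z2, v2))⟩ := by
      intro d j v
      rcases hP : h ⟨d, (j, (0, v))⟩ with ⟨dP, jP, zP, vP⟩
      have h1 : pit b q m t (h ⟨d, (j, (0, v))⟩) = tb (pit b q m t ⟨d, (j, (0, v))⟩) := htb _
      rw [hP] at h1
      have h2 : dP = d := by
        have h3 := congrArg Sigma.fst h1
        rw [hdpres] at h3
        exact h3
      subst h2
      exact ⟨jP, zP, vP, rfl⟩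
    choose j2 z2 v2 hJZV using hbase
    have hindep : ∀ (d : t.support) (j : Fin (t d.val)) (v v' : Fin (kk q m d.val)),
        j2 d j v = j2 d j v' ∧
        (((z2 d j v).val : ℕ) : ZMod d.val) = (((z2 d j v').val : ℕ) : ZMod d.val) := by
      intro d j v v'
      have h1 : pit b q m t (h ⟨d, (j, (0, v))⟩) = pit b q m t (h ⟨d, (j, (0, v'))⟩) := by
        rw [htb, htb]
        rfl
      rw [hJZV, hJZV] at h1
      exact Prod.mk_inj.mp (bt_mk_inj h1)
    have hhform : ∀ (d : t.support) (j : Fin (t d.val)) (z : ZMod b) (v : Fin (kk q m d.val)),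
        h ⟨d, (j, (z, v))⟩ = ⟨d, (j2 d j v, (z2 d j v + z, v2 d j v))⟩ := by
      intro d j z v
      have h1 : (⟨d, (j, (z, v))⟩ : Mt b q m t) = (⇑(yt b q m t))^[z.val] ⟨d, (j, (0, v))⟩ := by
        rw [yt_iterate, zero_add, ZMod.natCast_rightInverse z]
      rw [h1, hline, hJZV, yt_iterate, ZMod.natCast_rightInverse z]
    have hnuinj : ∀ (d : t.support) (j : Fin (t d.val)), Function.Injective (v2 d j) := by
      intro d j v v' hvv
      have h1 : h ⟨d, (j, (z2 d j v' - z2 d j v, v))⟩ = h ⟨d, (j, (0, v'))⟩ := by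
        rw [hhform, hhform, add_zero, (hindep d j v v').1, hvv]
        have : z2 d j v + (z2 d j v' - z2 d j v) = z2 d j v' := by ring
        rw [this]
      have h2 := h.injective h1
      exact (Prod.mk_inj.mp ((Prod.mk_inj.mp (mt_mk_inj h2)).2)).2
    have hnusur : ∀ (d : t.support) (j : Fin (t d.val)), Function.Surjective (v2 d j) :=
      fun d j => Finite.injective_iff_surjective.mp (hnuinj d j)
    have hTinj : ∀ (d : t.support), Function.Injective (fun j => j2 d j ⟨0, hkkpos d⟩) := by
      intro d j j' hjj
      simp only at hjj
      obtain ⟨v', hv'⟩ := hnusur d j' (v2 d j ⟨0, hkkpos d⟩)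
      have h1 : h ⟨d, (j', (z2 d j ⟨0, hkkpos d⟩ - z2 d j' v', v'))⟩
          = h ⟨d, (j, (0, ⟨0, hkkpos d⟩))⟩ := by
        rw [hhform, hhform, add_zero]
        have e1 : z2 d j' v' + (z2 d j ⟨0, hkkpos d⟩ - z2 d j' v') = z2 d j ⟨0, hkkpos d⟩ := by
          ring
        rw [e1, hv']
        have e2 : j2 d j' v' = j2 d j ⟨0, hkkpos d⟩ := by
          rw [(hindep d j' v' ⟨0, hkkpos d⟩).1, hjj]
        rw [e2]
      have h2 := h.injective h1
      exact ((Prod.mk_inj.mp (mt_mk_inj h2)).1).symm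
    have hTsur : ∀ (d : t.support), Function.Surjective (fun j => j2 d j ⟨0, hkkpos d⟩) :=
      fun d => Finite.injective_iff_surjective.mp (hTinj d)
    let D0 : ∀ d, K d := fun d =>
      (Equiv.ofBijective _ ⟨hTinj d, hTsur d⟩,
       fun j => ((((z2 d j ⟨0, hkkpos d⟩).val : ℕ) : ZMod d.val),
         (fun v => (zeta d (z2 d j v)).2),
         Equiv.ofBijective _ ⟨hnuinj d j, hnusur d j⟩))
    refine ⟨D0, ?_⟩
    apply Subtype.ext
    apply Equiv.ext
    rintro ⟨d, j, z, v⟩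
    show Th D0 ⟨d, (j, (z, v))⟩ = h ⟨d, (j, (z, v))⟩
    rw [hTh, hhform]
    have hAeq : A d ((D0 d).2 j) v = z2 d j v := by
      show (zeta d).symm ((((z2 d j ⟨0, hkkpos d⟩).val : ℕ) : ZMod d.val),
        (zeta d (z2 d j v)).2) = z2 d j v
      rw [← (hindep d j v ⟨0, hkkpos d⟩).2]
      have h1 : (((( z2 d j v).val : ℕ) : ZMod d.val), (zeta d (z2 d j v)).2)
          = zeta d (z2 d j v) := by
        rw [hzspec]
      rw [h1, Equiv.symm_apply_apply]
    have hTeq : (D0 d).1 j = j2 d j v := by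
      show j2 d j ⟨0, hkkpos d⟩ = j2 d j v
      exact (hindep d j ⟨0, hkkpos d⟩ v).1
    rw [hAeq, hTeq]
    rfl
  -- counting
  rw [Nat.card_congr (Equiv.ofBijective _ ⟨hThinj, hThsur⟩).symm]
  rw [Nat.card_eq_fintype_card, Fintype.card_pi]
  have hone : ∀ d : t.support, Fintype.card (K d)
      = (t d.val).factorial *
        (d.val * ((cc b d.val) ^ (kk q m d.val) * (kk q m d.val).factorial)) ^ (t d.val) := by
    intro d
    show Fintype.card (Equiv.Perm (Fin (t d.val)) × _) = _
    rw [Fintype.card_prod, Fintype.card_perm, Fintype.card_fin, Fintype.card_fun,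
      Fintype.card_fin]
    congr 1
    rw [Fintype.card_prod, ZMod.card, Fintype.card_prod, Fintype.card_fun, ZMod.card,
      Fintype.card_fin, Fintype.card_perm, Fintype.card_fin]
  rw [Finset.prod_congr rfl (fun d _ => hone d)]
  rw [Finset.univ_eq_attach,
    Finset.prod_attach t.support (fun d => (t d).factorial *
      (d * ((cc b d) ^ (kk q m d) * (kk q m d).factorial)) ^ (t d))]

-- conjugation invariance helpers
theorem mp_conj {S : Type*} (h σ : Equiv.Perm S) (f : S) :
    Function.minimalPeriod (⇑(h * σ * h⁻¹)) (h f) = Function.minimalPeriod (⇑σ) f := by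
  apply minimalPeriod_transport h.injective
  intro e
  simp [Equiv.Perm.mul_apply]

theorem sizeCount_conj {F' : Type*} (σ hh : Equiv.Perm F') (d : ℕ) :
    sizeCount (hh * σ * hh⁻¹) d = sizeCount σ d := by
  apply Nat.card_congr
  exact (Equiv.subtypeEquiv hh (fun f => by rw [mp_conj])).symm

theorem valid_of_mem (hb : 0 < b) (hq : 0 < q) (hm : 0 < m) (hs : 0 < s)
    (hcardF : Fintype.card F = m) (hfib : ∀ i : F, Fintype.card {e // π e = i} = s)
    (hn : m * s = b * q)
    (y : Equiv.Perm E) (hall : ∀ e, Function.minimalPeriod (⇑y) e = b)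
    (τ : Equiv.Perm F) (hτ : ∀ e, π (y e) = τ (π e)) :
    (∀ d ∈ (extT τ).support, 0 < d ∧ d ∣ b ∧ m ∣ d * q) ∧
      (extT τ).sum (fun d td => d * td) = m := by
  classical
  have hsur := pi_surjective hs hfib
  have hτsemi : Function.Semiconj π ⇑y ⇑τ := fun e => hτ e
  constructor
  · intro d hd
    have htd : extT τ d ≠ 0 := Finsupp.mem_support_iff.mp hd
    have hd0 : 0 < d := by
      rcases Nat.eq_zero_or_pos d with h0 | h0
      · subst h0
        exact absurd (by rw [extT_apply, sizeCount_zero]) htd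
      · exact h0
    have hsz : sizeCount τ d ≠ 0 := fun h0 => htd (by rw [extT_apply, h0, Nat.zero_div])
    obtain ⟨f, hf⟩ := exists_of_sizeCount_ne hsz
    obtain ⟨e0, he0⟩ := hsur f
    have hdb : d ∣ b := by
      have hyb : (⇑y)^[b] e0 = e0 := by
        have h1 := Function.iterate_minimalPeriod (f := ⇑y) (x := e0)
        rwa [hall] at h1
      have hτb : Function.IsPeriodicPt (⇑τ) b f := by
        have h2 := (hτsemi.iterate_right b) e0
        rw [hyb, he0] at h2
        exact h2.symm
      have h3 := hτb.minimalPeriod_dvd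
      rwa [hf] at h3
    refine ⟨hd0, hdb, ?_⟩
    set P : E → Prop := fun e => τ.SameCycle f (π e) with hP
    have hPiff : ∀ e, P e ↔ P (y e) := by
      intro e
      rw [hP]
      simp only
      rw [hτ e]
      exact (Equiv.Perm.sameCycle_apply_right).symm
    have hmpP : ∀ es : {e // P e},
        Function.minimalPeriod (⇑(y.subtypePerm (fun x => (hPiff x).symm))) es = b := by
      intro es
      rw [mp_subtypePerm]
      exact hall es.val
    have hdvd2 : b ∣ Fintype.card {e // P e} :=
      card_dvd_of_allPeriods (y.subtypePerm (fun x => (hPiff x).symm)) b hb hmpP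
    have hcardP : Fintype.card {e // P e} = d * s := by
      rw [Fintype.card_subtype]
      rw [Finset.card_eq_sum_card_fiberwise (f := π)
        (t := Finset.univ.filter (fun f' => τ.SameCycle f f'))
        (fun e he => by
          rw [Finset.mem_coe, Finset.mem_filter] at he ⊢
          exact ⟨Finset.mem_univ _, he.2⟩)]
      have hfibcard : ∀ f' ∈ Finset.univ.filter (fun f' => τ.SameCycle f f'),
          ((Finset.univ.filter P).filter (fun e => π e = f')).card = s := by
        intro f' hf'
        rw [Finset.mem_filter] at hf'
        have : (Finset.univ.filter P).filter (fun e => π e = f')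
            = Finset.univ.filter (fun e => π e = f') := by
          apply Finset.ext
          intro e
          simp only [Finset.mem_filter, Finset.mem_univ, true_and]
          constructor
          · rintro ⟨-, h2⟩; exact h2
          · intro h2
            refine ⟨?_, h2⟩
            rw [hP]; simp only; rw [h2]
            exact hf'.2
        rw [this, ← Fintype.card_subtype, hfib]
      rw [Finset.sum_congr rfl hfibcard, Finset.sum_const, smul_eq_mul]
      congr 1
      have h4 : (Finset.univ.filter (fun f' => τ.SameCycle f f') : Set F)
          = permOrbit τ f := by
        ext f'
        simp only [Finset.coe_filter, Finset.mem_univ, true_and, Set.mem_setOf_eq]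
        rfl
      have h5 := permOrbit_ncard τ f
      rw [← h4, Set.ncard_coe_finset] at h5
      rw [h5, hf]
    rw [hcardP] at hdvd2
    have h6 : m * s ∣ (d * q) * s := by
      calc m * s = b * q := hn
        _ ∣ (d * s) * q := mul_dvd_mul_right hdvd2 q
        _ = (d * q) * s := by ring
    exact (mul_dvd_mul_iff_right hs.ne').mp h6
  · rw [extT_sum, hcardF]

theorem card_O_t (hb : 0 < b) (hq : 0 < q) (hm : 0 < m) (hs : 0 < s)
    (hcardF : Fintype.card F = m) (hfib : ∀ i : F, Fintype.card {e // π e = i} = s)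
    (hn : m * s = b * q)
    (hsum : t.sum (fun d td => d * td) = m)
    (hsupp : ∀ d ∈ t.support, 0 < d ∧ d ∣ b ∧ m ∣ d * q)
    (y0 : Equiv.Perm E) (hy0mp : ∀ e, Function.minimalPeriod (⇑y0) e = b)
    (τ0 : Equiv.Perm F) (hτ0 : ∀ e, π (y0 e) = τ0 (π e))
    (hext0 : ∀ d : ℕ, sizeCount τ0 d = d * t d) :
    Nat.card {y : Equiv.Perm E // (∀ e, Function.minimalPeriod (⇑y) e = b) ∧
        ∃ τ' : Equiv.Perm F, (∀ e, π (y e) = τ' (π e)) ∧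
          ∀ d : ℕ, sizeCount τ' d = d * t d}
      * (∏ d ∈ t.support, ((t d).factorial *
          (d * ((cc b d) ^ (kk q m d) * (kk q m d).factorial)) ^ (t d)))
      = m.factorial * s.factorial ^ m := by
  classical
  haveI : NeZero b := ⟨hb.ne'⟩
  have hsur := pi_surjective hs hfib
  let GC : Subgroup (ConjAct (Equiv.Perm E)) :=
    (blockSubgroup π).comap (ConjAct.ofConjAct.toMonoidHom)
  have hGCmem : ∀ k : ConjAct (Equiv.Perm E),
      k ∈ GC ↔ BlocksTo π (ConjAct.ofConjAct k) := fun k => Iff.rfl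
  obtain ⟨Ψ0, β0, hΨ0y, hΨ0π⟩ :=
    MST hb hq hm hs hcardF hfib hn hsum hsupp y0 hy0mp τ0 hτ0 hext0
  have hpit_from : ∀ x : Mt b q m t, pit b q m t x = β0.symm (π (Ψ0 x)) := by
    intro x
    rw [hΨ0π, Equiv.symm_apply_apply]
  -- the orbit is exactly the set in question
  have horb : MulAction.orbit GC y0 = {y : Equiv.Perm E |
      (∀ e, Function.minimalPeriod (⇑y) e = b) ∧
      ∃ τ' : Equiv.Perm F, (∀ e, π (y e) = τ' (π e)) ∧
        ∀ d : ℕ, sizeCount τ' d = d * t d} := by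
    apply Set.ext
    intro y
    constructor
    · intro hy
      obtain ⟨⟨k, hkG⟩, hg⟩ := hy
      have hkb : BlocksTo π (ConjAct.ofConjAct k) := hkG
      set h : Equiv.Perm E := ConjAct.ofConjAct k with hh
      have hsm : (⟨k, hkG⟩ : GC) • y0 = h * y0 * h⁻¹ := by
        rw [Subgroup.smul_def, ConjAct.smul_def]
      have hg2 : (⟨k, hkG⟩ : GC) • y0 = y := hg
      rw [hsm] at hg2
      rw [← hg2]
      constructor
      · intro e
        have h1 := mp_conj h y0 (h⁻¹ e)
        rw [perm_apply_inv_self] at h1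
        rw [h1, hy0mp]
      · obtain ⟨τh, hτh⟩ := exists_tau hsur hkb
        refine ⟨τh * τ0 * τh⁻¹, ?_, ?_⟩
        · intro e
          have h2 : π (h⁻¹ e) = τh⁻¹ (π e) := by
            apply τh.injective
            rw [perm_apply_inv_self, ← hτh, perm_apply_inv_self]
          show π (h (y0 (h⁻¹ e))) = τh (τ0 (τh⁻¹ (π e)))
          rw [hτh, hτ0, h2]
        · intro d
          rw [sizeCount_conj, hext0]
    · rintro ⟨hymp, τ1, hτ1, hcnt1⟩
      obtain ⟨Ψ1, β1, hΨ1y, hΨ1π⟩ :=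
        MST hb hq hm hs hcardF hfib hn hsum hsupp y hymp τ1 hτ1 hcnt1
      set h : Equiv.Perm E := Ψ0.symm.trans Ψ1 with hh
      have hhe : ∀ e, h e = Ψ1 (Ψ0.symm e) := fun e => rfl
      have hhb : BlocksTo π h := by
        intro e e' hee
        rw [hhe, hhe, hΨ1π, hΨ1π, hpit_from, hpit_from]
        rw [Equiv.apply_symm_apply, Equiv.apply_symm_apply, hee]
      refine ⟨⟨ConjAct.toConjAct h, ?_⟩, ?_⟩
      · rw [hGCmem, ConjAct.ofConjAct_toConjAct]
        exact hhb
      · show ConjAct.toConjAct h • y0 = y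
        rw [ConjAct.smul_def, ConjAct.ofConjAct_toConjAct]
        apply Equiv.ext
        intro e
        show h (y0 (h⁻¹ e)) = y e
        have h3 : h⁻¹ e = Ψ0 (Ψ1.symm e) := by
          apply h.injective
          rw [perm_apply_inv_self, hhe, Equiv.symm_apply_apply,
            Equiv.apply_symm_apply]
        rw [h3, ← hΨ0y, hhe, Equiv.symm_apply_apply, hΨ1y, Equiv.apply_symm_apply]
  -- stabilizer is the model stabilizer
  have hstabeq : Nat.card (MulAction.stabilizer GC y0)
      = Nat.card {h : Equiv.Perm (Mt b q m t) // BlocksTo (pit b q m t) h ∧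
          ∀ p, h (yt b q m t p) = yt b q m t (h p)} := by
    apply Nat.card_congr
    apply Equiv.symm
    refine Equiv.ofBijective (fun w => ⟨⟨ConjAct.toConjAct (Ψ0.permCongr w.val), ?_⟩, ?_⟩)
      ⟨?_, ?_⟩
    · rw [hGCmem, ConjAct.ofConjAct_toConjAct]
      intro e e' hee
      show π (Ψ0 (w.val (Ψ0.symm e))) = π (Ψ0 (w.val (Ψ0.symm e')))
      rw [hΨ0π, hΨ0π]
      congr 1
      apply w.2.1
      rw [hpit_from, hpit_from, Equiv.apply_symm_apply, Equiv.apply_symm_apply, hee]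
    · show ConjAct.toConjAct (Ψ0.permCongr w.val) • y0 = y0
      rw [ConjAct.smul_def, ConjAct.ofConjAct_toConjAct]
      have hcm : (Ψ0.permCongr w.val) * y0 = y0 * (Ψ0.permCongr w.val) := by
        apply Equiv.ext
        intro e
        show Ψ0 (w.val (Ψ0.symm (y0 e))) = y0 (Ψ0 (w.val (Ψ0.symm e)))
        have h4 : Ψ0.symm (y0 e) = yt b q m t (Ψ0.symm e) := by
          apply Ψ0.injective
          rw [Equiv.apply_symm_apply, hΨ0y, Equiv.apply_symm_apply]
        rw [h4, w.2.2]
        exact hΨ0y _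
      rw [hcm]
      group
    · intro w w' hww
      have h5 : ConjAct.toConjAct (Ψ0.permCongr w.val)
          = ConjAct.toConjAct (Ψ0.permCongr w'.val) := congrArg (fun x => x.val.val) hww
      apply Subtype.ext
      exact (Equiv.injective _) ((ConjAct.toConjAct.injective) h5)
    · rintro ⟨⟨k, hkG⟩, hkst⟩
      set h : Equiv.Perm E := ConjAct.ofConjAct k with hh
      have hkb : BlocksTo π h := hkG
      have hcm : h * y0 = y0 * h := by
        have h6 : h * y0 * h⁻¹ = y0 := by
          have h6' := MulAction.mem_stabilizer_iff.mp hkst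
          rwa [Subgroup.smul_def, ConjAct.smul_def] at h6'
        calc h * y0 = (h * y0 * h⁻¹) * h := by group
          _ = y0 * h := by rw [h6]
      have hcmpt : ∀ e, h (y0 e) = y0 (h e) := by
        intro e
        have := congrArg (fun (w : Equiv.Perm E) => w e) hcm
        simpa using this
      refine ⟨⟨Ψ0.symm.permCongr h, ?_, ?_⟩, ?_⟩
      · intro p p' hpp
        show pit b q m t (Ψ0.symm (h (Ψ0 p))) = pit b q m t (Ψ0.symm (h (Ψ0 p')))
        rw [hpit_from, hpit_from, Equiv.apply_symm_apply, Equiv.apply_symm_apply]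
        congr 1
        apply hkb
        rw [hΨ0π, hΨ0π, hpp]
      · intro p
        show Ψ0.symm (h (Ψ0 (yt b q m t p))) = yt b q m t (Ψ0.symm (h (Ψ0 p)))
        rw [hΨ0y, hcmpt]
        apply Ψ0.injective
        rw [Equiv.apply_symm_apply, hΨ0y, Equiv.apply_symm_apply]
      · apply Subtype.ext
        apply Subtype.ext
        show ConjAct.toConjAct (Ψ0.permCongr (Ψ0.symm.permCongr h)) = k
        rw [hh]
        have h7 : Ψ0.permCongr (Ψ0.symm.permCongr (ConjAct.ofConjAct k))
            = ConjAct.ofConjAct k := by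
          apply Equiv.ext
          intro e
          show Ψ0 (Ψ0.symm ((ConjAct.ofConjAct k) (Ψ0 (Ψ0.symm e)))) = _
          rw [Equiv.apply_symm_apply, Equiv.apply_symm_apply]
        rw [h7]
        simp
  -- group cardinality
  have hGCcard : Nat.card GC = m.factorial * s.factorial ^ m := by
    have hcg : Nat.card GC = Nat.card (blockSubgroup π) := by
      apply Nat.card_congr
      refine ⟨fun kk => ⟨ConjAct.ofConjAct kk.val, kk.2⟩,
        fun h => ⟨ConjAct.toConjAct h.val, by
          rw [hGCmem, ConjAct.ofConjAct_toConjAct]; exact h.2⟩, ?_, ?_⟩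
      · intro kk; apply Subtype.ext; simp
      · intro h; apply Subtype.ext; simp
    rw [hcg, card_blockSubgroup s hs hfib, hcardF]
  -- orbit-stabilizer
  haveI : Fintype GC := Fintype.ofFinite _
  haveI : Fintype (MulAction.orbit GC y0) := Fintype.ofFinite _
  haveI : Fintype (MulAction.stabilizer GC y0) := Fintype.ofFinite _
  have hos := MulAction.card_orbit_mul_card_stabilizer_eq_card_group GC y0
  rw [← Nat.card_eq_fintype_card, ← Nat.card_eq_fintype_card, ← Nat.card_eq_fintype_card]
    at hos
  have horbcard : Nat.card (MulAction.orbit GC y0)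
      = Nat.card {y : Equiv.Perm E // (∀ e, Function.minimalPeriod (⇑y) e = b) ∧
          ∃ τ' : Equiv.Perm F, (∀ e, π (y e) = τ' (π e)) ∧
            ∀ d : ℕ, sizeCount τ' d = d * t d} := by
    apply Nat.card_congr
    apply Equiv.setCongr horb
  rw [horbcard, hstabeq, card_model_stab hb hq hm hs hn hsum hsupp, hGCcard] at hos
  exact hos

theorem factor_eq {b d td : ℕ} (hd : 0 < d) (hdb : d ∣ b) (kkd : ℕ) :
    ((1 : ℚ) / ((d : ℚ) ^ td * ((td.factorial : ℚ)))) *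
        (((d : ℚ) ^ kkd) / ((kkd.factorial : ℚ))) ^ td *
      (((td.factorial : ℚ)) *
        (((d : ℚ) * (((cc b d : ℕ) : ℚ) ^ kkd * ((kkd.factorial : ℚ)))) ^ td))
      = (b : ℚ) ^ (kkd * td) := by
  have hbc : (d : ℚ) * ((cc b d : ℕ) : ℚ) = (b : ℚ) := by exact_mod_cast dcc_eq hdb
  have hD : (d : ℚ) ≠ 0 := Nat.cast_ne_zero.mpr hd.ne'
  have hT : ((td.factorial : ℚ)) ≠ 0 := Nat.cast_ne_zero.mpr (Nat.factorial_ne_zero td)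
  have hK : ((kkd.factorial : ℚ)) ≠ 0 := Nat.cast_ne_zero.mpr (Nat.factorial_ne_zero kkd)
  rw [← hbc]
  field_simp
  have hKK : (kkd.factorial : ℚ) ^ td * (kkd.factorial : ℚ)⁻¹ ^ td = 1 := by
    rw [← mul_pow, mul_inv_cancel₀ hK, one_pow]
  linear_combination ((d : ℚ) ^ (kkd * td) * (d : ℚ) ^ td * ((cc b d : ℕ) : ℚ) ^ (kkd * td)) * hKK

theorem sum_kk (hq : 0 < q) (hm : 0 < m) {t : ℕ →₀ ℕ}
    (hsum : t.sum (fun d td => d * td) = m)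
    (hsupp : ∀ d ∈ t.support, m ∣ d * q) :
    ∑ d ∈ t.support, kk q m d * t d = q := by
  apply Nat.eq_of_mul_eq_mul_left hm
  rw [Finset.mul_sum]
  have h1 : ∀ d ∈ t.support, m * (kk q m d * t d) = q * (d * t d) := by
    intro d hd
    rw [kk_def, ← mul_assoc, Nat.mul_div_cancel' (hsupp d hd)]
    ring
  rw [Finset.sum_congr rfl h1, ← Finset.mul_sum]
  rw [show (∑ d ∈ t.support, d * t d) = t.sum (fun d td => d * td) from rfl, hsum]
  ring

theorem main_abstract (hb : 0 < b) (hq : 0 < q) (hm : 0 < m) (hs : 0 < s)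
    (hcardF : Fintype.card F = m) (hfib : ∀ i : F, Fintype.card {e // π e = i} = s)
    (hn : m * s = b * q) :
    (Nat.card {y : Equiv.Perm E //
        (∀ e, Function.minimalPeriod (⇑y) e = b) ∧ BlocksTo π y} : ℚ)
      = ((m.factorial : ℚ) / (b : ℚ) ^ q) * ((s.factorial : ℚ)) ^ m *
        ∑ᶠ t : ℕ →₀ ℕ,
          (if (t.sum (fun d td => d * td) = m ∧ ∀ d ∈ t.support, d ∣ b ∧ m ∣ d * q)
          then ∏ d ∈ t.support,
            (1 / ((d : ℚ) ^ (t d) * ((t d).factorial : ℚ))) *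
              (((d : ℚ) ^ (d * q / m)) / (((d * q / m).factorial : ℚ))) ^ (t d)
          else 0) := by
  classical
  haveI : NeZero b := ⟨hb.ne'⟩
  have hsur := pi_surjective hs hfib
  set emap : Equiv.Perm E → (ℕ →₀ ℕ) := fun y =>
    if hy : BlocksTo π y then extT (exists_tau hsur hy).choose else 0 with hemap
  set YF : Finset (Equiv.Perm E) := Finset.univ.filter
    (fun y => (∀ e, Function.minimalPeriod (⇑y) e = b) ∧ BlocksTo π y) with hYF
  have hYcard : Nat.card {y : Equiv.Perm E //
      (∀ e, Function.minimalPeriod (⇑y) e = b) ∧ BlocksTo π y} = YF.card := by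
    rw [Nat.card_eq_fintype_card, Fintype.card_subtype]
  have hpart : YF.card = ∑ tt ∈ YF.image emap, (YF.filter (fun y => emap y = tt)).card :=
    Finset.card_eq_sum_card_fiberwise (fun y hy => Finset.mem_image_of_mem emap hy)
  -- membership characterization of fibers
  have hchar : ∀ (tt : ℕ →₀ ℕ), (tt.sum (fun d td => d * td) = m
        ∧ ∀ d ∈ tt.support, 0 < d ∧ d ∣ b ∧ m ∣ d * q) →
      ∀ y : Equiv.Perm E, (y ∈ YF ∧ emap y = tt) ↔
        ((∀ e, Function.minimalPeriod (⇑y) e = b) ∧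
          ∃ τ' : Equiv.Perm F, (∀ e, π (y e) = τ' (π e)) ∧
            ∀ d : ℕ, sizeCount τ' d = d * tt d) := by
    intro tt ⟨httsum, httsupp⟩ y
    have htt0 : tt 0 = 0 := by
      by_contra h0
      exact absurd (httsupp 0 (Finsupp.mem_support_iff.mpr h0)).1 (lt_irrefl 0)
    constructor
    · rintro ⟨hyY, hyem⟩
      rw [hYF, Finset.mem_filter] at hyY
      obtain ⟨-, hymp, hybl⟩ := hyY
      refine ⟨hymp, (exists_tau hsur hybl).choose, (exists_tau hsur hybl).choose_spec, ?_⟩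
      intro d
      have h1 : extT (exists_tau hsur hybl).choose = tt := by
        rw [hemap] at hyem
        simpa [hybl] using hyem
      rw [sizeCount_eq_extT, h1]
    · rintro ⟨hymp, τ', hspec, hcnt⟩
      have hybl : BlocksTo π y := by
        intro e e' hee
        rw [hspec, hspec, hee]
      have hτeq : (exists_tau hsur hybl).choose = τ' :=
        tau_unique _ _ (exists_tau hsur hybl).choose_spec hspec hsur
      have hext : extT τ' = tt := by
        apply Finsupp.ext
        intro d
        rcases Nat.eq_zero_or_pos d with h0 | h0
        · subst h0
          rw [htt0, extT_apply, sizeCount_zero, Nat.zero_div]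
        · rw [extT_apply, hcnt, Nat.mul_div_cancel_left _ h0]
      constructor
      · rw [hYF, Finset.mem_filter]
        exact ⟨Finset.mem_univ _, hymp, hybl⟩
      · rw [hemap]
        simp only [hybl, dif_pos]
        rw [hτeq, hext]
  -- valid t's are in the image
  have hsupport : Function.support (fun tt : ℕ →₀ ℕ =>
      (if (tt.sum (fun d td => d * td) = m ∧ ∀ d ∈ tt.support, d ∣ b ∧ m ∣ d * q)
        then ∏ d ∈ tt.support,
          (1 / ((d : ℚ) ^ (tt d) * ((tt d).factorial : ℚ))) *
            (((d : ℚ) ^ (d * q / m)) / (((d * q / m).factorial : ℚ))) ^ (tt d)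
        else 0)) ⊆ ↑(YF.image emap) := by
    intro tt htt
    rw [Function.mem_support] at htt
    by_cases hc : (tt.sum (fun d td => d * td) = m
        ∧ ∀ d ∈ tt.support, d ∣ b ∧ m ∣ d * q)
    · have hsupp3 : ∀ d ∈ tt.support, 0 < d ∧ d ∣ b ∧ m ∣ d * q := by
        intro d hd
        refine ⟨?_, (hc.2 d hd).1, (hc.2 d hd).2⟩
        rcases Nat.eq_zero_or_pos d with h0 | h0
        · subst h0
          have := (hc.2 0 hd).1
          rw [Nat.zero_dvd] at this
          omega
        · exact h0
      obtain ⟨y, τ, hymp, hspec, hcnt⟩ :=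
        exists_model_member (t := tt) hb hq hm hs hcardF hfib hn hc.1 hsupp3
      have hmem := (hchar tt ⟨hc.1, hsupp3⟩ y).mpr ⟨hymp, τ, hspec, hcnt⟩
      exact Finset.mem_coe.mpr (Finset.mem_image.mpr ⟨y, hmem.1, hmem.2⟩)
    · rw [if_neg hc] at htt
      exact absurd rfl htt
  rw [hYcard, hpart, Nat.cast_sum,
    finsum_eq_sum_of_support_subset _ hsupport, Finset.mul_sum]
  apply Finset.sum_congr rfl
  intro tt htt
  -- establish validity of tt
  obtain ⟨y1, hy1Y, hy1e⟩ := Finset.mem_image.mp htt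
  have hy1Y' := hy1Y
  rw [hYF, Finset.mem_filter] at hy1Y'
  obtain ⟨-, hy1mp, hy1bl⟩ := hy1Y'
  have hτ1 := (exists_tau hsur hy1bl).choose_spec
  have hextT : extT (exists_tau hsur hy1bl).choose = tt := by
    rw [hemap] at hy1e
    simpa [hy1bl] using hy1e
  obtain ⟨hvsupp, hvsum⟩ := valid_of_mem hb hq hm hs hcardF hfib hn y1 hy1mp
    (exists_tau hsur hy1bl).choose hτ1
  rw [hextT] at hvsupp hvsum
  have hcond : (tt.sum (fun d td => d * td) = m
      ∧ ∀ d ∈ tt.support, d ∣ b ∧ m ∣ d * q) :=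
    ⟨hvsum, fun d hd => (hvsupp d hd).2⟩
  rw [if_pos hcond]
  have hext1 : ∀ d : ℕ, sizeCount (exists_tau hsur hy1bl).choose d = d * tt d := by
    intro d
    rw [sizeCount_eq_extT, hextT]
  have hcount := card_O_t hb hq hm hs hcardF hfib hn hvsum hvsupp y1 hy1mp
    (exists_tau hsur hy1bl).choose hτ1 hext1
  -- identify the filter with the subtype
  have hids : (YF.filter (fun y => emap y = tt)).card
      = Nat.card {y : Equiv.Perm E // (∀ e, Function.minimalPeriod (⇑y) e = b) ∧
          ∃ τ' : Equiv.Perm F, (∀ e, π (y e) = τ' (π e)) ∧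
            ∀ d : ℕ, sizeCount τ' d = d * tt d} := by
    rw [Nat.card_eq_fintype_card, Fintype.card_subtype]
    congr 1
    apply Finset.ext
    intro y
    constructor
    · intro hyin
      rw [Finset.mem_filter] at hyin
      simp only [Finset.mem_filter, Finset.mem_univ, true_and]
      exact (hchar tt ⟨hvsum, hvsupp⟩ y).mp hyin
    · intro hmem
      simp only [Finset.mem_filter, Finset.mem_univ, true_and] at hmem
      rw [Finset.mem_filter]
      exact (hchar tt ⟨hvsum, hvsupp⟩ y).mpr hmem
  -- now the algebra
  set W : ℕ := ∏ d ∈ tt.support, ((tt d).factorial *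
      (d * ((cc b d) ^ (kk q m d) * (kk q m d).factorial)) ^ (tt d)) with hW
  have hcount' : (YF.filter (fun y => emap y = tt)).card * W = m.factorial * s.factorial ^ m := by
    rw [hids, hW]
    exact hcount
  have hWQ : ((W : ℕ) : ℚ) = ∏ d ∈ tt.support, (((tt d).factorial : ℚ) *
      (((d : ℚ)) * (((cc b d : ℕ) : ℚ) ^ (kk q m d) * ((kk q m d).factorial : ℚ))) ^ (tt d)) := by
    rw [hW]
    push_cast
    rfl
  have hprod : (∏ d ∈ tt.support,
        (1 / ((d : ℚ) ^ (tt d) * ((tt d).factorial : ℚ))) *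
          (((d : ℚ) ^ (d * q / m)) / (((d * q / m).factorial : ℚ))) ^ (tt d))
        * ((W : ℕ) : ℚ) = (b : ℚ) ^ q := by
    rw [hWQ, ← Finset.prod_mul_distrib]
    have hterm : ∀ d ∈ tt.support,
        ((1 / ((d : ℚ) ^ (tt d) * ((tt d).factorial : ℚ))) *
          (((d : ℚ) ^ (d * q / m)) / (((d * q / m).factorial : ℚ))) ^ (tt d))
          * (((tt d).factorial : ℚ) *
            (((d : ℚ)) * (((cc b d : ℕ) : ℚ) ^ (kk q m d) * ((kk q m d).factorial : ℚ))) ^ (tt d))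
          = (b : ℚ) ^ (kk q m d * tt d) := by
      intro d hd
      have h2 := factor_eq (b := b) (hvsupp d hd).1 (hvsupp d hd).2.1 (td := tt d) (kk q m d)
      rw [← h2, kk_def]
    rw [Finset.prod_congr rfl hterm, Finset.prod_pow_eq_pow_sum,
      sum_kk hq hm hvsum (fun d hd => (hvsupp d hd).2.2)]
  -- final equation
  have hWne : ((W : ℕ) : ℚ) ≠ 0 := by
    rw [hWQ]
    apply Finset.prod_ne_zero_iff.mpr
    intro d hd
    apply mul_ne_zero
    · exact Nat.cast_ne_zero.mpr (Nat.factorial_ne_zero _)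
    · apply pow_ne_zero
      apply mul_ne_zero
      · exact Nat.cast_ne_zero.mpr (hvsupp d hd).1.ne'
      · apply mul_ne_zero
        · exact pow_ne_zero _ (Nat.cast_ne_zero.mpr (cc_pos hb (hvsupp d hd).1 (hvsupp d hd).2.1).ne')
        · exact Nat.cast_ne_zero.mpr (Nat.factorial_ne_zero _)
  have hbq : ((b : ℚ)) ^ q ≠ 0 := pow_ne_zero _ (Nat.cast_ne_zero.mpr hb.ne')
  have hQ : ((YF.filter (fun y => emap y = tt)).card : ℚ) * ((W : ℕ) : ℚ)
      = (m.factorial : ℚ) * (s.factorial : ℚ) ^ m := by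
    exact_mod_cast congrArg (fun n : ℕ => (n : ℚ)) hcount'
  have hgoal : ((YF.filter (fun y => emap y = tt)).card : ℚ) * ((W : ℕ) : ℚ)
      = ((m.factorial : ℚ) / (b : ℚ) ^ q) * ((s.factorial : ℚ)) ^ m *
        ((∏ d ∈ tt.support,
          (1 / ((d : ℚ) ^ (tt d) * ((tt d).factorial : ℚ))) *
            (((d : ℚ) ^ (d * q / m)) / (((d * q / m).factorial : ℚ))) ^ (tt d))
          * ((W : ℕ) : ℚ)) := by
    rw [hprod, hQ]
    field_simp
  apply mul_right_cancel₀ hWne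
  rw [hgoal]
  ring

theorem blocksTo_iff_image (hs : 0 < s) (hfib : ∀ i : F, Fintype.card {e // π e = i} = s)
    (y : Equiv.Perm E) :
    (∀ i : F, ∃ j : F, (⇑y) '' (π ⁻¹' {i}) = π ⁻¹' {j}) ↔ BlocksTo π y := by
  have hcard : ∀ jj : F, (π ⁻¹' {jj} : Set E).ncard = s := by
    intro jj
    have h0 : (π ⁻¹' {jj} : Set E) = {e | π e = jj} := by ext e; simp
    rw [h0, ← Nat.card_coe_set_eq, Nat.card_eq_fintype_card, ← hfib jj]
    apply Fintype.card_congr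
    exact Equiv.subtypeEquivRight (fun e => by simp)
  constructor
  · intro h e e' hee
    obtain ⟨j, hj⟩ := h (π e)
    have h1 : y e ∈ π ⁻¹' {j} := by
      rw [← hj]
      exact ⟨e, by simp, rfl⟩
    have h2 : y e' ∈ π ⁻¹' {j} := by
      rw [← hj]
      exact ⟨e', by simp [hee], rfl⟩
    simp only [Set.mem_preimage, Set.mem_singleton_iff] at h1 h2
    rw [h1, h2]
  · intro hbl i
    have hsurj := pi_surjective hs hfib
    obtain ⟨e0, he0⟩ := hsurj i
    refine ⟨π (y e0), ?_⟩
    apply Set.eq_of_subset_of_ncard_le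
    · rintro _ ⟨e, he, rfl⟩
      simp only [Set.mem_preimage, Set.mem_singleton_iff] at he ⊢
      exact hbl e e0 (by rw [he, he0])
    · rw [hcard, Set.ncard_image_of_injective _ y.injective, hcard]
    · exact Set.toFinite _

end Main
end ImAux

open ImAux in
open Finsupp in
/-- Exact formula for the number `I_m` of permutations `y` of cycle type `(b^q)`
preserving the partition of `ZMod n` into residue classes modulo `m`. -/
theorem Im_formula (b q n m : ℕ) (hb : 0 < b) (hq : 0 < q) (hn : n = b * q)
    (hm : m ∣ n) (hm2 : 2 ≤ m) (hmn : m < n)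
    (x : Equiv.Perm (ZMod n)) (hx : x = Equiv.addRight (1 : ZMod n))
    (Im : ℕ)
    (hIm : Im = Set.ncard {y : Equiv.Perm (ZMod n) |
      allOrbitsSize y b ∧
      ∀ i : ZMod m, ∃ j : ZMod m,
        (⇑y) '' ((ZMod.castHom hm (ZMod m)) ⁻¹' {i}) = (ZMod.castHom hm (ZMod m)) ⁻¹' {j}}) :
    (Im : ℚ) = ((m.factorial : ℚ) / (b : ℚ) ^ q) * (((n / m).factorial : ℚ)) ^ m *
      ∑ᶠ t : ℕ →₀ ℕ,
        if (t.sum (fun d td => d * td) = m ∧ ∀ d ∈ t.support, d ∣ b ∧ m ∣ d * q)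
        then ∏ d ∈ t.support,
          (1 / ((d : ℚ) ^ (t d) * ((t d).factorial : ℚ))) *
            (((d : ℚ) ^ (d * q / m)) / (((d * q / m).factorial : ℚ))) ^ (t d)
        else 0 := by
  classical
  have hn0 : 0 < n := lt_trans (by omega) hmn
  have hm0 : 0 < m := by omega
  haveI : NeZero n := ⟨hn0.ne'⟩
  haveI : NeZero m := ⟨hm0.ne'⟩
  set π : ZMod n → ZMod m := ⇑(ZMod.castHom hm (ZMod m)) with hπ
  set s : ℕ := n / m with hs'
  have hs : 0 < s := Nat.div_pos (Nat.le_of_dvd hn0 hm) hm0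
  have hmuls : m * s = b * q := by
    rw [hs', Nat.mul_div_cancel' hm, hn]
  have hcardF : Fintype.card (ZMod m) = m := ZMod.card m
  have hfib : ∀ i : ZMod m, Fintype.card {e : ZMod n // π e = i} = s := by
    intro i
    exact card_castHom_fiber hm hm0 i
  have habs := main_abstract (π := π) hb hq hm0 hs hcardF hfib hmuls
  have hcongr : Set.ncard {y : Equiv.Perm (ZMod n) |
      allOrbitsSize y b ∧
      ∀ i : ZMod m, ∃ j : ZMod m,
        (⇑y) '' ((ZMod.castHom hm (ZMod m)) ⁻¹' {i}) = (ZMod.castHom hm (ZMod m)) ⁻¹' {j}}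
      = Nat.card {y : Equiv.Perm (ZMod n) //
        (∀ e, Function.minimalPeriod (⇑y) e = b) ∧ BlocksTo π y} := by
    rw [← Nat.card_coe_set_eq]
    apply Nat.card_congr
    apply Equiv.subtypeEquivRight
    intro y
    simp only [Set.mem_setOf_eq]
    constructor
    · rintro ⟨h1, h2⟩
      exact ⟨(allOrbitsSize_iff y b).mp h1, (blocksTo_iff_image hs hfib y).mp h2⟩
    · rintro ⟨h1, h2⟩
      exact ⟨(allOrbitsSize_iff y b).mpr h1, (blocksTo_iff_image hs hfib y).mpr h2⟩
  rw [hIm, hcongr]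
  exact habs
end

section
/- Let n be a positive integer and let x be the permutation of ZMod n given by k ↦ k + 1. (a) If G is a subgroup of Equiv.Perm (ZMod n) containing x, and B ⊆ ZMod n is a block for the natural action of G that is nontrivial (B is nonempty, B is not a singleton, and B ≠ ZMod n), then there exist a divisor m of n with 2 ≤ m < n and an element j of ZMod n such that B = { j + k·(m : ZMod n) : k ∈ ℤ }, i.e. B is a coset of the additive subgroup of ZMod n generated by the image of m. (b) Conversely, for every divisor m of n with 2 ≤ m < n and every j ∈ ZMod n, the set { j + k·(m : ZMod n) : k ∈ ℤ } is a nontrivial block for the cyclic subgroup of Equiv.Perm (ZMod n) generated by x. -/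
/-- The "residue class modulo `m`" through `j` in `ZMod n`: the coset
`{ j + k·m : k ∈ ℤ }` of the additive subgroup generated by (the image of) `m`. -/
def residueClass (n m : ℕ) (j : ZMod n) : Set (ZMod n) :=
  {z | ∃ k : ℤ, z = j + k • (m : ZMod n)}

lemma residueClass_image_add (n m : ℕ) (j c : ZMod n) :
    (· + c) '' residueClass n m j = residueClass n m (j + c) := by
  ext z
  constructor
  · rintro ⟨w, ⟨k, rfl⟩, rfl⟩
    exact ⟨k, by ring⟩
  · rintro ⟨k, rfl⟩
    exact ⟨j + k • (m : ZMod n), ⟨k, rfl⟩, by ring⟩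

lemma residueClass_eq_of (n m : ℕ) (j c : ZMod n)
    (hc : ∃ k : ℤ, c = k • (m : ZMod n)) :
    residueClass n m (j + c) = residueClass n m j := by
  obtain ⟨kc, rfl⟩ := hc
  ext z
  constructor
  · rintro ⟨k, rfl⟩
    exact ⟨kc + k, by rw [add_smul]; ring⟩
  · rintro ⟨k, rfl⟩
    exact ⟨k - kc, by rw [sub_smul]; ring⟩

lemma residueClass_disjoint_of (n m : ℕ) (j c : ZMod n)
    (hc : ¬ ∃ k : ℤ, c = k • (m : ZMod n)) :
    Disjoint (residueClass n m (j + c)) (residueClass n m j) := by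
  rw [Set.disjoint_left]
  rintro z ⟨k₁, h₁⟩ ⟨k₂, h₂⟩
  refine hc ⟨k₂ - k₁, ?_⟩
  rw [sub_smul]
  have : j + c + k₁ • (m : ZMod n) = j + k₂ • (m : ZMod n) := by rw [← h₁, ← h₂]
  linear_combination this

lemma one_not_zsmul (n m : ℕ) (hm : m ∣ n) (h2 : 2 ≤ m) :
    ¬ ∃ k : ℤ, (1 : ZMod n) = k • (m : ZMod n) := by
  rintro ⟨k, hk⟩
  haveI : Fact (1 < m) := ⟨h2⟩
  have := congrArg (ZMod.castHom hm (ZMod m)) hk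
  rw [map_one, map_zsmul, map_natCast, ZMod.natCast_self, smul_zero] at this
  exact one_ne_zero this

lemma natCast_ne_zero_of (n m : ℕ) (hm0 : 0 < m) (hmn : m < n) :
    ((m : ZMod n)) ≠ 0 := by
  haveI : NeZero n := ⟨(hm0.trans hmn).ne'⟩
  rw [Ne, ZMod.natCast_eq_zero_iff]
  exact fun h => absurd (Nat.le_of_dvd hm0 h) (not_le.mpr hmn)

/-- (a) Every nontrivial block of a subgroup of `Equiv.Perm (ZMod n)` containing the
translation `x : k ↦ k + 1` is a residue class modulo some divisor `m` of `n` with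
`2 ≤ m < n`; (b) conversely every such residue class is a nontrivial block for the
cyclic subgroup generated by `x`. -/
theorem blocks_of_full_cycle (n : ℕ) (hn : 0 < n)
    (x : Equiv.Perm (ZMod n)) (hx : x = Equiv.addRight (1 : ZMod n)) :
    (∀ G : Subgroup (Equiv.Perm (ZMod n)), x ∈ G →
      ∀ B : Set (ZMod n),
        (∀ g ∈ G, (⇑g) '' B = B ∨ Disjoint ((⇑g) '' B) B) →
        B.Nonempty → (¬ ∃ e, B = {e}) → B ≠ Set.univ →
        ∃ m : ℕ, ∃ j : ZMod n, m ∣ n ∧ 2 ≤ m ∧ m < n ∧ B = residueClass n m j) ∧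
    (∀ m : ℕ, m ∣ n → 2 ≤ m → m < n → ∀ j : ZMod n,
      (residueClass n m j).Nonempty ∧
      (∀ g ∈ Subgroup.zpowers x,
        (⇑g) '' residueClass n m j = residueClass n m j ∨
          Disjoint ((⇑g) '' residueClass n m j) (residueClass n m j)) ∧
      (¬ ∃ e, residueClass n m j = {e}) ∧
      residueClass n m j ≠ Set.univ) := by
  haveI : NeZero n := ⟨hn.ne'⟩
  -- every translation is an integer power of x
  have hxz : ∀ c : ZMod n, Equiv.addRight c = x ^ ((c.val : ℤ)) := by
    intro c
    rw [hx, Equiv.zsmul_addRight]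
    congr 1
    rw [zsmul_eq_mul, mul_one]
    push_cast
    simp [ZMod.natCast_val, ZMod.cast_id]
  have hcoe : ∀ c : ZMod n, ⇑(Equiv.addRight c) = (· + c) := fun c => rfl
  constructor
  · -- part (a)
    intro G hxG B hB hne hnsing hnuniv
    obtain ⟨j, hj⟩ := hne
    have htrans : ∀ t : ZMod n,
        (· + t) '' B = B ∨ Disjoint ((· + t) '' B) B := by
      intro t
      have hmem : Equiv.addRight t ∈ G := by
        rw [hxz t]; exact zpow_mem hxG _
      have := hB _ hmem
      rwa [hcoe t] at this
    -- the stabilizer subgroup S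
    let S : AddSubgroup (ZMod n) :=
      { carrier := {t | (· + t) '' B = B}
        zero_mem' := by simp
        add_mem' := by
          intro s t hs ht
          have h1 : (· + (s + t)) '' B = (· + t) '' ((· + s) '' B) := by
            rw [Set.image_image]
            simp [add_assoc]
          show (· + (s + t)) '' B = B
          rw [h1, hs, ht]
        neg_mem' := by
          intro t ht
          have h2 : (· + (-t)) '' ((· + t) '' B) = B := by
            rw [Set.image_image]
            simp
          show (· + (-t)) '' B = B
          calc (· + (-t)) '' B = (· + (-t)) '' ((· + t) '' B) := by rw [ht]
            _ = B := h2 }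
    have hBS : ∀ z, z ∈ B ↔ z - j ∈ S := by
      intro z
      constructor
      · intro hz
        rcases htrans (z - j) with h | h
        · exact h
        · exact absurd hz (Set.disjoint_left.mp h ⟨j, hj, by ring⟩)
      · intro hz
        have : z ∈ (· + (z - j)) '' B := ⟨j, hj, by ring⟩
        rwa [hz] at this
    -- classify S
    obtain ⟨a, ha⟩ := Int.subgroup_cyclic (S.comap (Int.castAddHom (ZMod n)))
    set P := S.comap (Int.castAddHom (ZMod n)) with hP
    have hmem_iff : ∀ k : ℤ, k ∈ P ↔ a ∣ k := by
      intro k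
      rw [ha, AddSubgroup.mem_closure_singleton]
      constructor
      · rintro ⟨c, rfl⟩; exact ⟨c, by rw [zsmul_eq_mul, Int.cast_id, mul_comm]⟩
      · rintro ⟨c, rfl⟩; exact ⟨c, by rw [zsmul_eq_mul, Int.cast_id, mul_comm]⟩
    have hPS : ∀ k : ℤ, k ∈ P ↔ ((k : ZMod n)) ∈ S := fun k => Iff.rfl
    set m := a.natAbs with hm
    have hma : ((m : ℤ)) = a ∨ ((m : ℤ)) = -a := by
      rcases Int.natAbs_eq a with h | h
      · exact Or.inl h.symm
      · exact Or.inr (by rw [h]; ring)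
    have hmP : ((m : ℤ)) ∈ P := by
      have haP : a ∈ P := (hmem_iff a).mpr dvd_rfl
      rcases hma with h | h
      · rw [h]; exact haP
      · rw [h]; exact neg_mem haP
    have hSm : ∀ t : ZMod n, t ∈ S ↔ ∃ k : ℤ, t = k • (m : ZMod n) := by
      intro t
      constructor
      · intro ht
        have hval : ((t.val : ℤ)) ∈ P := by
          rw [hPS]
          have : (((t.val : ℤ) : ZMod n)) = t := by
            push_cast
            simp [ZMod.natCast_val, ZMod.cast_id]
          rwa [this]
        obtain ⟨c, hc⟩ := (hmem_iff _).mp hval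
        have hcast : t = (((a * c : ℤ)) : ZMod n) := by
          rw [← hc]
          push_cast
          simp [ZMod.natCast_val, ZMod.cast_id]
        rcases hma with h | h
        · exact ⟨c, by rw [hcast, zsmul_eq_mul, ← h]; push_cast; ring⟩
        · refine ⟨-c, ?_⟩
          rw [hcast, zsmul_eq_mul]
          have : a = -(m : ℤ) := by rw [h]; ring
          rw [this]
          push_cast
          ring
      · rintro ⟨k, rfl⟩
        have hk : (k * (m : ℤ)) ∈ P := by
          rw [hmem_iff] at hmP ⊢
          exact hmP.mul_left k
        rw [hPS] at hk
        have : (((k * (m : ℤ)) : ℤ) : ZMod n) = k • ((m : ℕ) : ZMod n) := by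
          rw [zsmul_eq_mul]; push_cast; ring
        rwa [this] at hk
    -- B is the residue class of j mod m
    have hBres : B = residueClass n m j := by
      ext z
      rw [hBS, hSm]
      constructor
      · rintro ⟨k, hk⟩; exact ⟨k, by rw [← hk]; ring⟩
      · rintro ⟨k, hk⟩; exact ⟨k, by rw [hk]; ring⟩
    -- (m : ZMod n) ≠ 0
    have hmne : ((m : ℕ) : ZMod n) ≠ 0 := by
      intro h0
      refine hnsing ⟨j, ?_⟩
      rw [hBres]
      ext z
      simp only [Set.mem_singleton_iff]
      constructor
      · rintro ⟨k, rfl⟩; rw [h0, smul_zero, add_zero]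
      · rintro rfl; exact ⟨0, by rw [h0, smul_zero, add_zero]⟩
    -- m ∣ n
    have hmdvd : m ∣ n := by
      have hnP : ((n : ℤ)) ∈ P := by
        rw [hPS]
        have : (((n : ℤ)) : ZMod n) = (0 : ZMod n) := by push_cast; simp
        rw [this]; exact zero_mem S
      have := (hmem_iff _).mp hnP
      have h2 : (m : ℤ) ∣ (n : ℤ) := by
        rcases hma with h | h
        · rwa [h]
        · rw [h]; exact (neg_dvd).mpr this
      exact_mod_cast h2
    -- m ≠ 0 and m ≠ n
    have hm0 : m ≠ 0 := by
      intro h; apply hmne; rw [h]; simp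
    have hmn' : m ≠ n := by
      intro h; apply hmne; rw [h]; simp
    have hmlt : m < n := lt_of_le_of_ne (Nat.le_of_dvd hn hmdvd) hmn'
    -- m ≠ 1
    have hm1 : m ≠ 1 := by
      intro h1
      apply hnuniv
      rw [hBres]
      ext z
      simp only [Set.mem_univ, iff_true]
      refine ⟨((z - j).val : ℤ), ?_⟩
      rw [h1, zsmul_eq_mul]
      push_cast
      simp [ZMod.natCast_val, ZMod.cast_id]
    have h2m : 2 ≤ m := by omega
    exact ⟨m, j, hmdvd, h2m, hmlt, hBres⟩
  · -- part (b)
    intro m hmdvd h2 hlt j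
    have hm0 : 0 < m := by omega
    refine ⟨⟨j, 0, by simp⟩, ?_, ?_, ?_⟩
    · intro g hg
      obtain ⟨k, rfl⟩ := Subgroup.mem_zpowers_iff.mp hg
      rw [hx, Equiv.zsmul_addRight]
      rw [hcoe]
      rw [residueClass_image_add]
      by_cases hc : ∃ k' : ℤ, (k • (1 : ZMod n)) = k' • (m : ZMod n)
      · exact Or.inl (residueClass_eq_of n m j _ hc)
      · exact Or.inr (residueClass_disjoint_of n m j _ hc)
    · rintro ⟨e, he⟩
      have h1 : j ∈ residueClass n m j := ⟨0, by simp⟩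
      have h2' : j + (m : ZMod n) ∈ residueClass n m j := ⟨1, by simp⟩
      rw [he, Set.mem_singleton_iff] at h1 h2'
      have : ((m : ℕ) : ZMod n) = 0 := by
        have := h2'.trans h1.symm
        linear_combination this
      exact natCast_ne_zero_of n m hm0 hlt this
    · intro huniv
      have : j + 1 ∈ residueClass n m j := by rw [huniv]; trivial
      obtain ⟨k, hk⟩ := this
      exact one_not_zsmul n m hmdvd h2 ⟨k, by linear_combination hk⟩
end
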